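/- arXiv:1512.04691 — 12 statements merged into one kernel-verified Lean document; each statement's English description precedes it below -/
import Mathlib

section
/- With p_i/q_i the i-th convergent to √D, α_i = p_i + q_i√D, and T_i = p_i p_{i-1} - D q_i q_{i-1}, one has T_i = (-1)^{i+1}√D - N(α_i) c_{i+1}, where N(α_i) = p_i² - D q_i² and c_{i+1} is the (i+1)-st complete quotient of √D. -/
open Real

theorem stmt1 (D : ℕ) (hDsf : Squarefree D) (hD4 : D % 4 = 2 ∨ D % 4 = 3)
    (u : ℤ → ℤ) (c : ℤ → ℝ)
    (hc0 : c 0 = Real.sqrt D)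
    (hu : ∀ i : ℤ, 0 ≤ i → u i = ⌊c i⌋)
    (hcrec : ∀ i : ℤ, 0 ≤ i → c (i + 1) = 1 / (c i - u i))
    (p q : ℤ → ℤ)
    (hpm : p (-1) = 1) (hqm : q (-1) = 0)
    (hp0 : p 0 = u 0) (hq0 : q 0 = 1)
    (hprec : ∀ i : ℤ, 0 ≤ i → p (i + 1) = u (i + 1) * p i + p (i - 1))
    (hqrec : ∀ i : ℤ, 0 ≤ i → q (i + 1) = u (i + 1) * q i + q (i - 1)) :
    ∀ i : ℤ, 0 ≤ i →
      ((p i * p (i - 1) - (D : ℤ) * (q i * q (i - 1)) : ℤ) : ℝ)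
        = (-1 : ℝ) ^ (i + 1) * Real.sqrt D - ((p (i) : ℝ) ^ 2 - (D : ℝ) * (q (i) : ℝ) ^ 2) * c (i + 1) := by
  -- √D is irrational
  have hns : ¬ IsSquare D := by
    rintro ⟨k, hk⟩
    have : IsUnit k := hDsf k (by rw [hk])
    have hk1 : k = 1 := Nat.isUnit_iff.mp this
    rw [hk, hk1] at hD4
    omega
  have hirr0 : Irrational (Real.sqrt D) := irrational_sqrt_natCast_iff.mpr hns
  have hsq : Real.sqrt D * Real.sqrt D = (D : ℝ) :=
    Real.mul_self_sqrt (by positivity)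
  -- all complete quotients are irrational
  have hirr : ∀ i : ℤ, 0 ≤ i → Irrational (c i) := by
    refine fun i => Int.le_induction (motive := fun j _ => Irrational (c j)) ?_ ?_ i
    · rw [hc0]; exact hirr0
    · intro n hn ih
      beta_reduce at ih ⊢
      rw [hcrec n hn, one_div]
      exact (ih.sub_intCast (u n)).inv
  -- determinant identity
  have hdet : ∀ i : ℤ, 0 ≤ i →
      ((p i : ℝ) * q (i - 1) - (p (i - 1) : ℝ) * q i) = (-1 : ℝ) ^ (i + 1) := by
    refine fun i => Int.le_induction
      (motive := fun j _ => ((p j : ℝ) * q (j - 1) - (p (j - 1) : ℝ) * q j) = (-1 : ℝ) ^ (j + 1)) ?_ ?_ i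
    · have e0 : (0 : ℤ) - 1 = -1 := by norm_num
      rw [e0, hpm, hqm, hp0, hq0]
      norm_num
    · intro n hn ih
      beta_reduce at ih ⊢
      have hp := hprec n hn
      have hq := hqrec n hn
      have e : (n : ℤ) + 1 - 1 = n := by ring
      rw [e, hp, hq]
      push_cast
      have h2 : (-1 : ℝ) ^ (n + 1 + 1) = -(-1 : ℝ) ^ (n + 1) := by
        rw [zpow_add_one₀ (by norm_num : (-1 : ℝ) ≠ 0)]; ring
      rw [h2, ← ih]
      ring
  -- key relation: c (i+1) * (p i - q i √D) = -(p (i-1) - q (i-1) √D)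
  have hbeta : ∀ i : ℤ, 0 ≤ i →
      c (i + 1) * ((p i : ℝ) - (q i : ℝ) * Real.sqrt D)
        = -(((p (i - 1) : ℝ)) - (q (i - 1) : ℝ) * Real.sqrt D) := by
    refine fun i => Int.le_induction
      (motive := fun j _ => c (j + 1) * ((p j : ℝ) - (q j : ℝ) * Real.sqrt D)
        = -(((p (j - 1) : ℝ)) - (q (j - 1) : ℝ) * Real.sqrt D)) ?_ ?_ i
    · have hne : c 0 - (u 0 : ℝ) ≠ 0 := ((hirr 0 le_rfl).sub_intCast (u 0)).ne_zero
      have e0 : (0 : ℤ) - 1 = -1 := by norm_num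
      rw [hcrec 0 le_rfl, e0, hpm, hqm, hp0, hq0]
      rw [hc0] at hne ⊢
      push_cast
      field_simp
      ring
    · intro n hn ih
      beta_reduce at ih ⊢
      have hirn : Irrational (c (n + 1)) := hirr (n + 1) (by linarith)
      have hne : c (n + 1) - (u (n + 1) : ℝ) ≠ 0 := (hirn.sub_intCast (u (n + 1))).ne_zero
      have hp := hprec n hn
      have hq := hqrec n hn
      have e : (n : ℤ) + 1 - 1 = n := by ring
      rw [hcrec (n + 1) (by linarith), e, hp, hq]
      push_cast
      have hb : ((u (n+1) : ℝ) * (p n : ℝ) + (p (n-1) : ℝ))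
            - ((u (n+1) : ℝ) * (q n : ℝ) + (q (n-1) : ℝ)) * Real.sqrt D
          = ((u (n+1) : ℝ) - c (n+1)) * ((p n : ℝ) - (q n : ℝ) * Real.sqrt D) := by
        linear_combination ih
      rw [hb]
      field_simp
      ring
  -- conclude
  intro i hi
  have hb := hbeta i hi
  have hd := hdet i hi
  push_cast
  linear_combination (((p i : ℝ)) + (q i : ℝ) * Real.sqrt D) * hb
    + (c (i + 1) * (q i : ℝ) ^ 2 + (q i : ℝ) * (q (i - 1) : ℝ)) * hsq
    + Real.sqrt D * hd
end

section
/- Setting N_i := |p_i² - D q_i²| = (-1)^{i+1}(p_i² - D q_i²), the recurrence N_i = 2√D / c_{i+1} − N_{i-1} / c_{i+1}² holds for all i ≥ 0. -/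
open Real

theorem stmt2 (D : ℕ) (hDsf : Squarefree D) (hD4 : D % 4 = 2 ∨ D % 4 = 3)
    (u : ℤ → ℤ) (c : ℤ → ℝ)
    (hc0 : c 0 = Real.sqrt D)
    (hu : ∀ i : ℤ, 0 ≤ i → u i = ⌊c i⌋)
    (hcrec : ∀ i : ℤ, 0 ≤ i → c (i + 1) = 1 / (c i - u i))
    (p q : ℤ → ℤ)
    (hpm : p (-1) = 1) (hqm : q (-1) = 0)
    (hp0 : p 0 = u 0) (hq0 : q 0 = 1)
    (hprec : ∀ i : ℤ, 0 ≤ i → p (i + 1) = u (i + 1) * p i + p (i - 1))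
    (hqrec : ∀ i : ℤ, 0 ≤ i → q (i + 1) = u (i + 1) * q i + q (i - 1)) :
    ∀ i : ℤ, 0 ≤ i →
      |(p (i) : ℝ) ^ 2 - (D : ℝ) * (q (i) : ℝ) ^ 2| = (-1 : ℝ) ^ (i + 1) * ((p (i) : ℝ) ^ 2 - (D : ℝ) * (q (i) : ℝ) ^ 2) ∧
      |(p (i) : ℝ) ^ 2 - (D : ℝ) * (q (i) : ℝ) ^ 2|
        = 2 * Real.sqrt D / c (i + 1) - |(p (i - 1) : ℝ) ^ 2 - (D : ℝ) * (q (i - 1) : ℝ) ^ 2| / c (i + 1) ^ 2 := by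
  have hD2 : 2 ≤ D := by
    have h0 : D ≠ 0 := by rintro rfl; exact not_squarefree_zero hDsf
    have h1 : D ≠ 1 := by rintro rfl; omega
    omega
  have hnsq : ¬ IsSquare D := by
    rintro ⟨k, hk⟩
    have hk2 : IsUnit k := hDsf k (by rw [hk])
    have hk1 : k = 1 := Nat.isUnit_iff.mp hk2
    subst hk1
    simp at hk
    omega
  have hxirr : Irrational (Real.sqrt D) := irrational_sqrt_natCast_iff.mpr hnsq
  set x := Real.sqrt D with hxdef
  have hx0 : (0:ℝ) ≤ x := Real.sqrt_nonneg _
  have hx1 : 1 < x := by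
    rw [hxdef, show (1:ℝ) = Real.sqrt 1 by simp]
    exact Real.sqrt_lt_sqrt (by norm_num) (by exact_mod_cast hD2.trans_lt' (by norm_num))
  have hxsq : x ^ 2 = (D:ℝ) := Real.sq_sqrt (by positivity)
  -- irrationality of all complete quotients
  have hIrr : ∀ i : ℤ, 0 ≤ i → Irrational (c i) := by
    refine Int.le_induction ?_ ?_
    · rw [hc0]; exact hxirr
    · intro i hi ih
      rw [hcrec i hi, hu i hi, one_div]
      exact (ih.sub_intCast ⌊c i⌋).inv
  have hfract : ∀ i : ℤ, 0 ≤ i → 0 < c i - u i ∧ c i - u i < 1 := by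
    intro i hi
    rw [hu i hi]
    refine ⟨lt_of_le_of_ne (by linarith [Int.floor_le (c i)]) ?_, by linarith [Int.lt_floor_add_one (c i)]⟩
    exact fun h => (hIrr i hi).ne_int ⌊c i⌋ (by linarith)
  have hc1 : ∀ i : ℤ, 0 ≤ i → 1 < c (i + 1) := by
    intro i hi
    rw [hcrec i hi]
    exact one_lt_one_div (hfract i hi).1 (hfract i hi).2
  have hcpos : ∀ i : ℤ, 0 ≤ i → 0 < c (i + 1) := fun i hi => lt_trans one_pos (hc1 i hi)
  have hu1 : ∀ i : ℤ, 0 ≤ i → 1 ≤ u (i + 1) := by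
    intro i hi
    rw [hu (i+1) (by omega)]
    exact Int.le_floor.mpr (by exact_mod_cast (hc1 i hi).le)
  -- sign helpers
  have hsgn : ∀ n : ℤ, (-1:ℝ) ^ n = 1 ∨ (-1:ℝ) ^ n = -1 := fun n =>
    n.even_or_odd.imp (fun h => h.neg_one_zpow) (fun h => h.neg_one_zpow)
  have hs2 : ∀ n : ℤ, ((-1:ℝ) ^ n) ^ 2 = 1 := by
    intro n; rcases hsgn n with h | h <;> rw [h] <;> norm_num
  have hsucc : ∀ n : ℤ, (-1:ℝ) ^ (n + 1) = -(-1:ℝ) ^ n := by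
    intro n; rw [zpow_add₀ (by norm_num : (-1:ℝ) ≠ 0), zpow_one]; ring
  have habs : ∀ t B : ℝ, (t = 1 ∨ t = -1) → 0 < t * B → |B| = t * B := by
    rintro t B (rfl | rfl) h
    · rw [one_mul] at h ⊢; exact abs_of_pos h
    · have : B < 0 := by linarith
      rw [abs_of_neg this]; ring
  -- main invariant
  have main : ∀ i : ℤ, 0 ≤ i →
      ((0 < p i ∧ 0 < p (i-1)) ∧ (1 ≤ q i ∧ 0 ≤ q (i-1))) ∧
      c (i+1) * ((p i : ℝ) - x * q i) = -((p (i-1) : ℝ) - x * q (i-1)) ∧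
      0 < (-1:ℝ) ^ (i+1) * ((p i : ℝ) - x * q i) ∧
      ((p i : ℝ) * q (i-1) - (p (i-1) : ℝ) * q i) = (-1:ℝ) ^ (i+1) := by
    refine Int.le_induction ?_ ?_
    · have hne : c 0 - u 0 ≠ 0 := ne_of_gt (hfract 0 le_rfl).1
      have hu0 : (1:ℤ) ≤ u 0 := by
        rw [hu 0 le_rfl]
        exact Int.le_floor.mpr (by rw [hc0]; exact_mod_cast hx1.le)
      have hc1e := hcrec 0 le_rfl
      have hxu : (u 0 : ℝ) < x := by
        have := (hfract 0 le_rfl).1; rw [hc0] at this; linarith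
      simp only [show (0:ℤ) - 1 = -1 by norm_num, hpm, hqm, hp0, hq0]
      refine ⟨⟨⟨by omega, by omega⟩, by omega, by omega⟩, ?_, ?_, ?_⟩
      · rw [hc1e, hc0]; rw [hc0] at hne
        push_cast
        field_simp
        ring
      · rw [show (0:ℤ) + 1 = 1 by norm_num, zpow_one]
        push_cast
        nlinarith
      · rw [show (0:ℤ) + 1 = 1 by norm_num, zpow_one]
        push_cast
        ring
    · intro i hi ih
      obtain ⟨⟨⟨hp, hp'⟩, hq, hq'⟩, hrel, hsign, hdet⟩ := ih
      have hpr := hprec i hi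
      have hqr := hqrec i hi
      have hu1' := hu1 i hi
      have hcr := hcrec (i+1) (by omega)
      have hne : c (i+1) - u (i+1) ≠ 0 := ne_of_gt (hfract (i+1) (by omega)).1
      have hc2pos := hcpos (i+1) (by omega)
      have hc2ne : c (i+1+1) ≠ 0 := ne_of_gt hc2pos
      simp only [add_sub_cancel_right]
      have hrel' : c (i+1+1) * ((p (i+1) : ℝ) - x * q (i+1)) = -((p i : ℝ) - x * q i) := by
        have hpr' : ((p (i+1) : ℝ)) = (u (i+1) : ℝ) * p i + p (i-1) := by exact_mod_cast congrArg (Int.cast : ℤ → ℝ) hpr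
        have hqr' : ((q (i+1) : ℝ)) = (u (i+1) : ℝ) * q i + q (i-1) := by exact_mod_cast congrArg (Int.cast : ℤ → ℝ) hqr
        rw [hpr', hqr', hcr]
        field_simp
        linear_combination hrel
      refine ⟨⟨⟨?_, hp⟩, ?_, by omega⟩, hrel', ?_, ?_⟩
      · rw [hpr]; nlinarith
      · rw [hqr]; nlinarith
      · have hA : (-1:ℝ)^(i+1+1) * ((p (i+1) : ℝ) - x * q (i+1))
            = ((-1:ℝ)^(i+1) * ((p i : ℝ) - x * q i)) / c (i+1+1) := by
          rw [eq_div_iff hc2ne, hsucc (i+1)]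
          linear_combination (-(-1:ℝ)^(i+1)) * hrel'
        rw [hA]
        exact div_pos hsign hc2pos
      · have hpr' : ((p (i+1) : ℝ)) = (u (i+1) : ℝ) * p i + p (i-1) := by exact_mod_cast congrArg (Int.cast : ℤ → ℝ) hpr
        have hqr' : ((q (i+1) : ℝ)) = (u (i+1) : ℝ) * q i + q (i-1) := by exact_mod_cast congrArg (Int.cast : ℤ → ℝ) hqr
        rw [hpr', hqr', hsucc (i+1)]
        linear_combination -hdet
  -- conclusion
  intro i hi
  obtain ⟨⟨⟨hp, hp'⟩, hq, hq'⟩, hrel, hsign, hdet⟩ := main i hi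
  have hcp := hcpos i hi
  have hcn : c (i+1) ≠ 0 := ne_of_gt hcp
  have hpR : (0:ℝ) < p i := by exact_mod_cast hp
  have hpR' : (0:ℝ) < p (i-1) := by exact_mod_cast hp'
  have hqR : (1:ℝ) ≤ q i := by exact_mod_cast hq
  have hqR' : (0:ℝ) ≤ q (i-1) := by exact_mod_cast hq'
  have hsign' : 0 < (-1:ℝ) ^ i * ((p (i-1) : ℝ) - x * q (i-1)) := by
    have h1 : (-1:ℝ) ^ i * ((p (i-1) : ℝ) - x * q (i-1))
        = c (i+1) * ((-1:ℝ)^(i+1) * ((p i : ℝ) - x * q i)) := by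
      have hs := hsucc i
      linear_combination ((-1:ℝ)^i) * hrel + (-(c (i+1) * ((p i : ℝ) - x * q i))) * hs
    rw [h1]
    exact mul_pos hcp hsign
  have habs1 : |(p i : ℝ) ^ 2 - (D : ℝ) * (q i : ℝ) ^ 2|
      = (-1:ℝ)^(i+1) * ((p i : ℝ) ^ 2 - (D : ℝ) * (q i : ℝ) ^ 2) := by
    apply habs _ _ (hsgn (i+1))
    have : (-1:ℝ)^(i+1) * ((p i : ℝ) ^ 2 - (D : ℝ) * (q i : ℝ) ^ 2)
        = ((-1:ℝ)^(i+1) * ((p i : ℝ) - x * q i)) * ((p i : ℝ) + x * q i) := by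
      rw [← hxsq]; ring
    rw [this]
    apply mul_pos hsign
    nlinarith
  have habs2 : |(p (i-1) : ℝ) ^ 2 - (D : ℝ) * (q (i-1) : ℝ) ^ 2|
      = (-1:ℝ)^i * ((p (i-1) : ℝ) ^ 2 - (D : ℝ) * (q (i-1) : ℝ) ^ 2) := by
    apply habs _ _ (hsgn i)
    have : (-1:ℝ)^i * ((p (i-1) : ℝ) ^ 2 - (D : ℝ) * (q (i-1) : ℝ) ^ 2)
        = ((-1:ℝ)^i * ((p (i-1) : ℝ) - x * q (i-1))) * ((p (i-1) : ℝ) + x * q (i-1)) := by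
      rw [← hxsq]; ring
    rw [this]
    apply mul_pos hsign'
    nlinarith
  refine ⟨habs1, ?_⟩
  rw [habs1, habs2, ← hxsq]
  have hm : (-1:ℝ)^i = -(-1:ℝ)^(i+1) := by linarith [hsucc i]
  have hss := hs2 (i+1)
  have key : (-1:ℝ)^(i+1) * ((p i:ℝ)^2 - x^2 * (q i:ℝ)^2) * c (i+1) ^ 2
      = 2 * x * c (i+1) + (-1:ℝ)^(i+1) * ((p (i-1):ℝ)^2 - x^2 * (q (i-1):ℝ)^2) := by
    linear_combination (((-1:ℝ)^(i+1)) * (c (i+1) * ((p i:ℝ) + x * q i) - ((p (i-1):ℝ) + x * q (i-1)))) * hrel + (2*x*c (i+1)*((-1:ℝ)^(i+1))) * hdet + (2*x*c (i+1)) * hss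
  rw [hm]
  have hrw : 2 * x / c (i+1) - (-(-1:ℝ)^(i+1) * ((p (i-1):ℝ)^2 - x^2 * (q (i-1):ℝ)^2)) / c (i+1) ^ 2
      = (2 * x * c (i+1) + (-1:ℝ)^(i+1) * ((p (i-1):ℝ)^2 - x^2 * (q (i-1):ℝ)^2)) / c (i+1) ^ 2 := by
    field_simp
    ring
  rw [hrw, eq_div_iff (pow_ne_zero 2 hcn)]
  linear_combination key
end

section
/- For all i ≥ 0, the two-sided estimate (2√D / c_{i+1}) · (1 − 1/(c_i c_{i+1})) < N_i < 2√D / c_{i+1} holds, where N_i = |p_i² − D q_i²|. -/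
open Real

lemma aux_irr_ne (s : ℝ) (hs : Irrational s) (a b : ℤ) (hb : b ≠ 0) :
    (a : ℝ) - s * b ≠ 0 := by
  intro h
  apply hs
  refine ⟨(a : ℚ) / (b : ℚ), ?_⟩
  have hb' : (b : ℝ) ≠ 0 := Int.cast_ne_zero.mpr hb
  push_cast
  field_simp
  linarith

lemma aux_key (s : ℝ)
    (a b A B c0 c1 : ℝ) (d : ℤ)
    (hd : d = 1 ∨ d = -1)
    (hdb : 0 < (d : ℝ) * b)
    (hA : 0 < A)
    (hbc : b * c1 = -a)
    (hc1 : 1 < c1) (hc0 : 0 < c0)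
    (hring : B * a - b * A = -(2 * s * d))
    (hG : A * |a| < 2 * s / c0) :
    B * |b| < 2 * s / c1 ∧ 2 * s / c1 * (1 - 1 / (c0 * c1)) < B * |b| := by
  have hc1p : (0:ℝ) < c1 := by linarith
  have hd2 : (d : ℝ) * d = 1 := by rcases hd with h | h <;> simp [h]
  have habsb : |b| = (d : ℝ) * b := by
    rcases hd with h | h
    · subst h
      have hb : 0 < b := by push_cast at hdb; linarith
      push_cast; rw [one_mul]; exact abs_of_pos hb
    · subst h
      have hb : b < 0 := by push_cast at hdb; linarith
      rw [abs_of_neg hb]; push_cast; ring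
  have habsa : |a| = (d : ℝ) * b * c1 := by
    have ha : a = -(b * c1) := by linarith [hbc]
    rw [ha, abs_neg, abs_mul, habsb, abs_of_pos hc1p]
  have hkey : B * ((d:ℝ) * b) * c1 + A * ((d:ℝ) * b) = 2 * s := by
    linear_combination ((d:ℝ) * B) * hbc + (-(d:ℝ)) * hring + 2 * s * hd2
  constructor
  · rw [habsb, lt_div_iff₀ hc1p]
    nlinarith [mul_pos hA hdb]
  · rw [habsa] at hG
    rw [lt_div_iff₀ hc0] at hG
    have h1 : A * ((d:ℝ) * b) * (c0 * c1) < 2 * s := by linarith [hG]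
    have e1 : 2 * s / c1 * (1 - 1 / (c0 * c1)) = (2 * s * (c0 * c1) - 2 * s) / (c0 * c1 * c1) := by
      field_simp
    rw [habsb, e1, div_lt_iff₀ (by positivity)]
    have h2 : B * ((d:ℝ) * b) * (c0 * c1 * c1) = 2 * s * (c0 * c1) - A * ((d:ℝ) * b) * (c0 * c1) := by
      linear_combination (c0 * c1) * hkey
    linarith [h1, h2]


def Phi (s : ℝ) (c : ℤ → ℝ) (p q : ℤ → ℤ) (j : ℤ) : Prop :=
  (1 ≤ p j ∧ 1 ≤ q j ∧ 0 ≤ p (j - 1) ∧ 0 ≤ q (j - 1)) ∧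
  (0 < (p (j - 1) : ℝ) + s * (q (j - 1))) ∧
  (((p j : ℝ) - s * q j) ≠ 0) ∧
  (((p j : ℝ) - s * q j) * c (j + 1) = -((p (j - 1) : ℝ) - s * (q (j - 1)))) ∧
  (Irrational (c (j + 1)) ∧ 1 < c (j + 1)) ∧
  ((p j * q (j - 1) - p (j - 1) * q j = 1 ∨ p j * q (j - 1) - p (j - 1) * q j = -1) ∧
    (0 : ℝ) < ((p j * q (j - 1) - p (j - 1) * q j : ℤ) : ℝ) * ((p j : ℝ) - s * q j)) ∧
  (((p (j - 1) : ℝ) + s * q (j - 1)) * |(p (j - 1) : ℝ) - s * (q (j - 1))| < 2 * s / c j) ∧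
  (0 < c j) ∧
  ((((p j : ℝ) + s * q j) * |(p j : ℝ) - s * q j| < 2 * s / c (j + 1)) ∧
    (2 * s / c (j + 1) * (1 - 1 / (c j * c (j + 1))) < ((p j : ℝ) + s * q j) * |(p j : ℝ) - s * q j|))

theorem stmt4 (D : ℕ) (hDsf : Squarefree D) (hD4 : D % 4 = 2 ∨ D % 4 = 3)
    (u : ℤ → ℤ) (c : ℤ → ℝ)
    (hc0 : c 0 = Real.sqrt D)
    (hu : ∀ i : ℤ, 0 ≤ i → u i = ⌊c i⌋)
    (hcrec : ∀ i : ℤ, 0 ≤ i → c (i + 1) = 1 / (c i - u i))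
    (p q : ℤ → ℤ)
    (hpm : p (-1) = 1) (hqm : q (-1) = 0)
    (hp0 : p 0 = u 0) (hq0 : q 0 = 1)
    (hprec : ∀ i : ℤ, 0 ≤ i → p (i + 1) = u (i + 1) * p i + p (i - 1))
    (hqrec : ∀ i : ℤ, 0 ≤ i → q (i + 1) = u (i + 1) * q i + q (i - 1)) :
    ∀ i : ℤ, 0 ≤ i →
      2 * Real.sqrt D / c (i + 1) * (1 - 1 / (c i * c (i + 1))) < |(p (i) : ℝ) ^ 2 - (D : ℝ) * (q (i) : ℝ) ^ 2| ∧
      |(p (i) : ℝ) ^ 2 - (D : ℝ) * (q (i) : ℝ) ^ 2| < 2 * Real.sqrt D / c (i + 1) := by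
  set s := Real.sqrt D with hsdef
  -- basic facts about D and s
  have hD2 : 2 ≤ D := by rcases hD4 with h | h <;> omega
  have hDns : ¬ IsSquare D := by
    rintro ⟨m, hm⟩
    have hu' : IsUnit m := hDsf m (by rw [hm])
    have hm1 : m = 1 := Nat.isUnit_iff.mp hu'
    subst hm1
    simp at hm
    omega
  have hirr : Irrational s := irrational_sqrt_natCast_iff.mpr hDns
  have hs1 : 1 < s := by
    rw [hsdef, show (1:ℝ) = Real.sqrt 1 by simp]
    exact Real.sqrt_lt_sqrt (by norm_num) (by exact_mod_cast hD2)
  have hs0 : 0 < s := by linarith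
  have hsq : s ^ 2 = (D : ℝ) := Real.sq_sqrt (by positivity)
  -- the master invariant
  have master : ∀ j : ℤ, 0 ≤ j → Phi s c p q j := by
    intro j hj
    refine Int.le_induction (motive := fun j _ => Phi s c p q j) ?_ ?_ j hj
    · unfold Phi
      have hm1 : (0 : ℤ) - 1 = -1 := by norm_num
      rw [hm1]
      have hu0 : u 0 = ⌊c 0⌋ := hu 0 le_rfl
      have hfl : (1 : ℤ) ≤ ⌊s⌋ := Int.le_floor.mpr (by exact_mod_cast hs1.le)
      have hp0' : (1 : ℤ) ≤ p 0 := by rw [hp0, hu0, hc0]; exact hfl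
      have hple : (p 0 : ℝ) ≤ s := by
        rw [hp0, hu0, hc0]; exact_mod_cast Int.floor_le s
      have hc1 : c 1 = 1 / (c 0 - u 0) := by
        have := hcrec 0 le_rfl; simpa using this
      have hne : (p 0 : ℝ) - s * q 0 ≠ 0 := by
        apply aux_irr_ne s hirr
        rw [hq0]; norm_num
      have hne' : s - (p 0 : ℝ) ≠ 0 := by
        intro h; apply hne; rw [hq0]; push_cast; linarith
      have hpu : (u 0 : ℝ) = (p 0 : ℝ) := by rw [hp0]
      have hc1v : c 1 = 1 / (s - p 0) := by rw [hc1, hc0, hpu]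
      have hfr_pos : 0 < s - (p 0 : ℝ) := by
        rcases lt_or_eq_of_le hple with h | h
        · linarith
        · exact absurd h.symm (by intro hh; exact hne' (by linarith))
      have hDcomp : ((p 0 : ℝ) - s * q 0) * c 1 = -((p (-1) : ℝ) - s * (q (-1))) := by
        rw [hc1v, hpm, hqm, hq0]
        push_cast
        field_simp
        ring
      have hc1irr : Irrational (c 1) := by
        rw [hc1v, one_div, show s - (p 0 : ℝ) = s - ((p 0 : ℤ) : ℝ) by norm_num]
        exact (hirr.sub_intCast (p 0)).inv
      have hps : ((p 0 : ℤ) : ℝ) = ((⌊s⌋ : ℤ) : ℝ) := by rw [hp0, hu0, hc0]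
      have hfr_lt1 : s - (p 0 : ℝ) < 1 := by
        linarith [Int.lt_floor_add_one s, hps]
      have hc1gt : 1 < c 1 := by
        rw [hc1v]
        exact (one_lt_div hfr_pos).mpr (by linarith)
      refine ⟨⟨hp0', by rw [hq0], by rw [hpm]; norm_num, by rw [hqm]⟩, ?_, ?_, hDcomp, ⟨hc1irr, hc1gt⟩, ?_, ?_, ?_, ?_⟩
      · rw [hpm, hqm]; push_cast; norm_num
      · exact hne
      · constructor
        · right; rw [hpm, hqm, hq0]; ring
        · have : (p 0 * q (-1) - p (-1) * q 0 : ℤ) = -1 := by rw [hpm, hqm, hq0]; ring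
          rw [this, hq0]
          push_cast
          nlinarith [hfr_pos]
      · rw [hpm, hqm, hc0]
        push_cast
        rw [mul_zero, add_zero, sub_zero, abs_one, mul_one, mul_div_assoc, div_self hs0.ne']
        norm_num
      · rw [hc0]; exact hs0
      · -- bounds at 0 via aux_key
        have hG0 : ((p (-1) : ℝ) + s * q (-1)) * |(p (-1) : ℝ) - s * (q (-1))| < 2 * s / c 0 := by
          rw [hpm, hqm, hc0]
          push_cast
          rw [mul_zero, add_zero, sub_zero, abs_one, mul_one, mul_div_assoc, div_self hs0.ne']
          norm_num
        have hring : ((p 0 : ℝ) + s * q 0) * ((p (-1) : ℝ) - s * q (-1)) -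
            ((p 0 : ℝ) - s * q 0) * ((p (-1) : ℝ) + s * q (-1)) =
            -(2 * s * ((p 0 * q (-1) - p (-1) * q 0 : ℤ) : ℝ)) := by
          push_cast; ring
        have hd : (p 0 * q (-1) - p (-1) * q 0 : ℤ) = 1 ∨ (p 0 * q (-1) - p (-1) * q 0 : ℤ) = -1 := by
          right; rw [hpm, hqm, hq0]; ring
        have hdb : 0 < ((p 0 * q (-1) - p (-1) * q 0 : ℤ) : ℝ) * ((p 0 : ℝ) - s * q 0) := by
          have : (p 0 * q (-1) - p (-1) * q 0 : ℤ) = -1 := by rw [hpm, hqm, hq0]; ring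
          rw [this, hq0]; push_cast; nlinarith [hfr_pos]
        have hApos : 0 < (p (-1) : ℝ) + s * q (-1) := by rw [hpm, hqm]; push_cast; norm_num
        have := aux_key s ((p (-1) : ℝ) - s * q (-1)) ((p 0 : ℝ) - s * q 0)
          ((p (-1) : ℝ) + s * q (-1)) ((p 0 : ℝ) + s * q 0) (c 0) (c 1)
          (p 0 * q (-1) - p (-1) * q 0) hd hdb hApos hDcomp hc1gt (by rw [hc0]; exact hs0) hring hG0
        exact ⟨this.1, this.2⟩
    · intro n hn ih
      unfold Phi at ih ⊢
      obtain ⟨⟨hp1, hq1, hp0m, hq0m⟩, hBpos, hCne, hDrel, ⟨hIrr, hgt⟩, ⟨hd_or, hd_pos⟩, hGprev, hKpos, hUb, hLb⟩ := ih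
      simp only [add_sub_cancel_right]
      have hn1 : (0:ℤ) ≤ n + 1 := by linarith
      have hu1 : u (n + 1) = ⌊c (n + 1)⌋ := hu (n + 1) hn1
      have hu1ge : 1 ≤ u (n + 1) := by
        rw [hu1]; exact Int.le_floor.mpr (by exact_mod_cast hgt.le)
      have hp' := hprec n hn
      have hq' := hqrec n hn
      have hup : 1 * 1 ≤ u (n + 1) * p n :=
        mul_le_mul hu1ge hp1 (by norm_num) (by linarith)
      have huq : 1 * 1 ≤ u (n + 1) * q n :=
        mul_le_mul hu1ge hq1 (by norm_num) (by linarith)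
      have hpn1 : 1 ≤ p (n + 1) := by rw [hp']; linarith
      have hqn1 : 1 ≤ q (n + 1) := by rw [hq']; linarith
      have hp1R : (1 : ℝ) ≤ p n := by exact_mod_cast hp1
      have hq1R : (1 : ℝ) ≤ q n := by exact_mod_cast hq1
      have hB' : 0 < (p n : ℝ) + s * q n := by nlinarith [hs0]
      have hC' : (p (n + 1) : ℝ) - s * q (n + 1) ≠ 0 :=
        aux_irr_ne s hirr _ _ (by omega)
      have erecR : (p (n + 1) : ℝ) - s * q (n + 1) =
          ((p n : ℝ) - s * q n) * ((u (n + 1) : ℝ) - c (n + 1)) := by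
        rw [hp', hq']; push_cast; linear_combination hDrel
      have hfr_ne : c (n + 1) - (u (n + 1) : ℝ) ≠ 0 :=
        sub_ne_zero.mpr (hIrr.ne_int (u (n + 1)))
      have hc2v : c (n + 1 + 1) = 1 / (c (n + 1) - u (n + 1)) := hcrec (n + 1) hn1
      have hD' : ((p (n + 1) : ℝ) - s * q (n + 1)) * c (n + 1 + 1) = -((p n : ℝ) - s * q n) := by
        rw [erecR, hc2v, mul_one_div, div_eq_iff hfr_ne]; ring
      have hfrpos : 0 < c (n + 1) - (u (n + 1) : ℝ) := by
        rw [hu1]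
        have h1 := Int.floor_le (c (n + 1))
        have h2 : c (n + 1) ≠ ((⌊c (n + 1)⌋ : ℤ) : ℝ) := hIrr.ne_int _
        have h3 : ((⌊c (n + 1)⌋ : ℤ) : ℝ) < c (n + 1) := lt_of_le_of_ne h1 (fun h => h2 h.symm)
        linarith
      have hfrlt1 : c (n + 1) - (u (n + 1) : ℝ) < 1 := by
        rw [hu1]; linarith [Int.lt_floor_add_one (c (n + 1))]
      have hE' : Irrational (c (n + 1 + 1)) := by
        rw [hc2v, one_div]; exact (hIrr.sub_intCast (u (n + 1))).inv
      have hgt' : 1 < c (n + 1 + 1) := by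
        rw [hc2v]; exact (one_lt_div hfrpos).mpr (by linarith)
      have hd'eq : p (n + 1) * q n - p n * q (n + 1) = -(p n * q (n - 1) - p (n - 1) * q n) := by
        rw [hp', hq']; ring
      have hd'or : p (n + 1) * q n - p n * q (n + 1) = 1 ∨
          p (n + 1) * q n - p n * q (n + 1) = -1 := by
        rcases hd_or with h | h
        · right; rw [hd'eq, h]
        · left; rw [hd'eq, h]; norm_num
      have hcast : ((p (n + 1) * q n - p n * q (n + 1) : ℤ) : ℝ) =
          -((p n * q (n - 1) - p (n - 1) * q n : ℤ) : ℝ) := by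
        rw [hd'eq]; push_cast; ring
      have hmul : (((p (n + 1) * q n - p n * q (n + 1) : ℤ) : ℝ) *
          ((p (n + 1) : ℝ) - s * q (n + 1))) * c (n + 1 + 1) =
          ((p n * q (n - 1) - p (n - 1) * q n : ℤ) : ℝ) * ((p n : ℝ) - s * q n) := by
        rw [hcast]
        calc -((p n * q (n - 1) - p (n - 1) * q n : ℤ) : ℝ) *
            ((p (n + 1) : ℝ) - s * q (n + 1)) * c (n + 1 + 1)
            = -((p n * q (n - 1) - p (n - 1) * q n : ℤ) : ℝ) *
              (((p (n + 1) : ℝ) - s * q (n + 1)) * c (n + 1 + 1)) := by ring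
          _ = ((p n * q (n - 1) - p (n - 1) * q n : ℤ) : ℝ) * ((p n : ℝ) - s * q n) := by
              rw [hD']; ring
      have hd'pos : (0 : ℝ) < ((p (n + 1) * q n - p n * q (n + 1) : ℤ) : ℝ) *
          ((p (n + 1) : ℝ) - s * q (n + 1)) := by
        have hcpos : 0 < c (n + 1 + 1) := by linarith
        have hYeq := (eq_div_iff hcpos.ne').mpr hmul
        rw [hYeq]
        exact div_pos hd_pos hcpos
      have hring' : ((p (n + 1) : ℝ) + s * q (n + 1)) * ((p n : ℝ) - s * q n) -
          ((p (n + 1) : ℝ) - s * q (n + 1)) * ((p n : ℝ) + s * q n) =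
          -(2 * s * ((p (n + 1) * q n - p n * q (n + 1) : ℤ) : ℝ)) := by
        push_cast; ring
      have hkey := aux_key s ((p n : ℝ) - s * q n) ((p (n + 1) : ℝ) - s * q (n + 1))
        ((p n : ℝ) + s * q n) ((p (n + 1) : ℝ) + s * q (n + 1)) (c (n + 1)) (c (n + 1 + 1))
        (p (n + 1) * q n - p n * q (n + 1)) hd'or hd'pos hB' hD' hgt'
        (by linarith [hgt]) hring' hUb
      exact ⟨⟨hpn1, hqn1, by omega, by omega⟩, hB', hC', hD', ⟨hE', hgt'⟩, ⟨hd'or, hd'pos⟩,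
        hUb, by linarith [hgt], hkey.1, hkey.2⟩
  intro i hi
  have mi := master i hi
  unfold Phi at mi
  obtain ⟨hA, hB, hC, hD, hE, hF, hG, hK, hUb, hLb⟩ := mi
  have hEpos : 0 < (p i : ℝ) + s * q i := by
    have h1 : (1 : ℝ) ≤ p i := by exact_mod_cast hA.1
    have h2 : (1 : ℝ) ≤ q i := by exact_mod_cast hA.2.1
    nlinarith
  have hfac : (p i : ℝ) ^ 2 - (D : ℝ) * (q i : ℝ) ^ 2 =
      ((p i : ℝ) - s * q i) * ((p i : ℝ) + s * q i) := by
    linear_combination ((q i : ℝ)) ^ 2 * hsq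
  rw [hfac, abs_mul, abs_of_pos hEpos]
  exact ⟨by linarith [hLb], by linarith [hUb]⟩
end

section
/- For every k ≥ 1 there exists ε with |ε| ≤ 1 such that 1/c_i = Σ_{j=0}^{k-1} (-1)^j/(u_i^{j+1} c_{i+1}^j) + ε/(u_i^{k+1} u_{i+1}^k). -/
open Real

theorem stmt5 (D : ℕ) (hDsf : Squarefree D) (hD4 : D % 4 = 2 ∨ D % 4 = 3)
    (u : ℤ → ℤ) (c : ℤ → ℝ)
    (hc0 : c 0 = Real.sqrt D)
    (hu : ∀ i : ℤ, 0 ≤ i → u i = ⌊c i⌋)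
    (hcrec : ∀ i : ℤ, 0 ≤ i → c (i + 1) = 1 / (c i - u i)) :
    ∀ i : ℤ, 0 ≤ i → ∀ k : ℕ, 1 ≤ k → ∃ ε : ℝ, |ε| ≤ 1 ∧
      1 / c i = (∑ j ∈ Finset.range k, (-1 : ℝ) ^ j / ((u i : ℝ) ^ (j + 1) * c (i + 1) ^ j))
        + ε / ((u i : ℝ) ^ (k + 1) * (u (i + 1) : ℝ) ^ k) := by
  -- D ≥ 2
  have hD2 : 2 ≤ D := by
    rcases hD4 with h | h <;> (have := Nat.mod_le D 4; omega)
  have hDsq : ¬ IsSquare D := by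
    rintro ⟨r, hr⟩
    have : IsUnit r := hDsf r (hr ▸ dvd_refl D)
    have hr1 : r = 1 := Nat.isUnit_iff.mp this
    rw [hr1] at hr
    omega
  have hirr0 : Irrational (Real.sqrt D) := irrational_sqrt_natCast_iff.mpr hDsq
  have h1lt0 : (1 : ℝ) < Real.sqrt D := by
    rw [show (1:ℝ) = Real.sqrt 1 by simp]
    apply Real.sqrt_lt_sqrt (by norm_num)
    exact_mod_cast by omega
  -- key invariant
  have key : ∀ n : ℕ, Irrational (c n) ∧ 1 < c n := by
    intro n
    induction n with
    | zero => simpa [hc0] using ⟨hirr0, h1lt0⟩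
    | succ n ih =>
      obtain ⟨hirr, hlt⟩ := ih
      have hn : (0:ℤ) ≤ (n:ℤ) := Int.natCast_nonneg n
      have hun : u n = ⌊c n⌋ := hu n hn
      have hfrac_pos : 0 < c n - (u n : ℝ) := by
        rw [hun]
        rcases lt_or_eq_of_le (Int.floor_le (c n)) with h | h
        · linarith
        · exact absurd h.symm (by simpa using hirr.ne_int ⌊c n⌋)
      have hfrac_lt : c n - (u n : ℝ) < 1 := by
        rw [hun]; have := Int.lt_floor_add_one (c n); linarith
      have hrec := hcrec n hn
      have heq : ((n:ℤ) + 1) = ((n+1 : ℕ) : ℤ) := by push_cast; ring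
      rw [heq] at hrec
      constructor
      · rw [hrec, one_div]
        exact ((Irrational.sub_intCast hirr (u n)).inv)
      · rw [hrec]
        rw [lt_div_iff₀ hfrac_pos]
        linarith
  intro i hi k hk
  obtain ⟨n, rfl⟩ := Int.eq_ofNat_of_zero_le hi
  obtain ⟨hirr, hlt⟩ := key n
  have heq : ((n:ℤ) + 1) = ((n+1 : ℕ) : ℤ) := by push_cast; ring
  obtain ⟨hirr1, hlt1⟩ := by have := key (n+1); rwa [← heq] at this
  have hun : u n = ⌊c n⌋ := hu n (Int.natCast_nonneg n)
  have hun1 : u ((n:ℤ)+1) = ⌊c ((n:ℤ)+1)⌋ := hu _ (by positivity)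
  set a : ℝ := (u n : ℝ) with ha
  set b : ℝ := c ((n:ℤ)+1) with hb
  set a1 : ℝ := (u ((n:ℤ)+1) : ℝ) with ha1
  have ha_ge : (1:ℝ) ≤ a := by
    rw [ha, hun]; exact_mod_cast Int.le_floor.mpr (by exact_mod_cast hlt.le)
  have ha1_ge : (1:ℝ) ≤ a1 := by
    rw [ha1, hun1]; exact_mod_cast Int.le_floor.mpr (by exact_mod_cast hlt1.le)
  have ha1_le : a1 ≤ b := by rw [ha1, hun1, hb]; exact Int.floor_le _
  have hfrac_pos : 0 < c n - a := by
    rw [ha, hun]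
    rcases lt_or_eq_of_le (Int.floor_le (c n)) with h | h
    · linarith
    · exact absurd h.symm (by simpa using hirr.ne_int ⌊c n⌋)
  have hrec := hcrec n (Int.natCast_nonneg n)
  rw [← hb] at hrec
  have hbpos : 0 < b := by linarith
  have hci : c n = a + 1/b := by
    have : b * (c n - a) = 1 := by
      rw [hrec, ← ha]; field_simp [hfrac_pos.ne']
    field_simp
    nlinarith [this]
  have hcpos : 0 < c n := by linarith
  have halt : a < c n := by
    have : 0 < 1/b := by positivity
    rw [hci]; linarith
  have hapos : (0:ℝ) < a := by linarith
  refine ⟨(-1)^k * a * a1^k / (b^k * c n), ?_, ?_⟩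
  · have habs : |(-1:ℝ)^k * a * a1^k / (b^k * c ↑n)| = a * a1^k / (b^k * c ↑n) := by
      rw [abs_div, abs_mul, abs_mul, abs_pow, abs_pow, abs_neg, abs_one, one_pow, one_mul,
        abs_of_pos hapos, abs_of_pos (by linarith : (0:ℝ) < a1), abs_mul, abs_pow,
        abs_of_pos hbpos, abs_of_pos hcpos]
    rw [habs, div_le_one (by positivity)]
    have h1 : a1^k ≤ b^k := pow_le_pow_left₀ (by linarith) ha1_le k
    nlinarith [pow_pos hbpos k, pow_pos (lt_of_lt_of_le zero_lt_one ha1_ge) k]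
  · have main : ∀ m : ℕ, 1 / c n =
        (∑ j ∈ Finset.range m, (-1 : ℝ) ^ j / (a ^ (j + 1) * b ^ j))
          + (-1)^m / (a^m * b^m * c n) := by
      intro m
      induction m with
      | zero => simp
      | succ m ih =>
        rw [Finset.sum_range_succ, ih]
        have hb0 : b ≠ 0 := ne_of_gt hbpos
        have ha0 : a ≠ 0 := ne_of_gt hapos
        have hc0' : c ↑n ≠ 0 := ne_of_gt hcpos
        have hbc : b * (c ↑n - a) = 1 := by rw [hrec, ← ha]; field_simp [hfrac_pos.ne']
        have hstep : 1/(c ↑n) - 1/a = -(1/(a*b*c ↑n)) := by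
          field_simp
          linear_combination -hbc
        have key2 : 1/(a^m*b^m*c ↑n) - 1/(a^(m+1)*b^m)
            = -(1/(a^(m+1)*b^(m+1)*c ↑n)) := by
          calc 1/(a^m*b^m*c ↑n) - 1/(a^(m+1)*b^m)
              = (1/(a^m*b^m)) * (1/(c ↑n) - 1/a) := by ring
            _ = (1/(a^m*b^m)) * (-(1/(a*b*c ↑n))) := by rw [hstep]
            _ = -(1/(a^(m+1)*b^(m+1)*c ↑n)) := by ring
        linear_combination ((-1:ℝ)^m) * key2
    rw [main k]
    congr 1
    rw [div_div, div_eq_div_iff (by positivity) (by positivity)]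
    ring
end

section
/- There exists ε with |ε| ≤ 1 such that 1/c_i = (1/u_i)(1 − 1/(u_i u_{i+1})) + ε·(1/(u_i² u_{i+1}²))·(1/u_i + 1/u_{i+2}). -/
open Real

lemma key_aux (a b d x y : ℝ) (ha : 1 ≤ a) (hb : 1 ≤ b) (hd : 1 ≤ d)
    (hy : d < y) (hx : x = b + 1 / y) :
    ∃ ε : ℝ, |ε| ≤ 1 ∧ 1 / (a + 1 / x) = (1 / a) * (1 - 1 / (a * b))
      + ε * (1 / (a ^ 2 * b ^ 2)) * (1 / a + 1 / d) := by
  have ha0 : (0:ℝ) < a := lt_of_lt_of_le one_pos ha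
  have hb0 : (0:ℝ) < b := lt_of_lt_of_le one_pos hb
  have hd0 : (0:ℝ) < d := lt_of_lt_of_le one_pos hd
  have hy0 : (0:ℝ) < y := hd0.trans hy
  have hx0 : (0:ℝ) < x := by rw [hx]; positivity
  have haxp : (0:ℝ) < a * x + 1 := by positivity
  have hcx : (0:ℝ) < a + 1 / x := by positivity
  set B : ℝ := (1 / (a ^ 2 * b ^ 2)) * (1 / a + 1 / d) with hB
  have hB0 : 0 < B := by rw [hB]; positivity
  set E : ℝ := 1 / (a + 1 / x) - (1 / a) * (1 - 1 / (a * b)) with hEdef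
  have hE : E = (a + y) / (y * (a ^ 2 * b) * (a * x + 1)) := by
    rw [hEdef]
    rw [hx]
    have h1 : b + 1 / y ≠ 0 := by positivity
    have h2 : a + 1 / (b + 1 / y) ≠ 0 := by positivity
    have h3 : a * (b + 1 / y) + 1 ≠ 0 := by
      have : (0:ℝ) < a * (b + 1 / y) + 1 := by positivity
      exact this.ne'
    field_simp
    ring
  have hE0 : 0 < E := by
    rw [hE]; positivity
  have hBE : B - E = (a ^ 2 * b * (y - d) + a ^ 2 + a * y + a * d + d * y)
      / (y * (a ^ 3 * b ^ 2 * d) * (a * x + 1)) := by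
    rw [hB, hE, hx]
    have h3 : a * (b + 1 / y) + 1 ≠ 0 := by
      have : (0:ℝ) < a * (b + 1 / y) + 1 := by positivity
      exact this.ne'
    field_simp
    ring
  have hEB : E ≤ B := by
    have hnum : 0 < a ^ 2 * b * (y - d) + a ^ 2 + a * y + a * d + d * y := by
      have hyd : 0 < y - d := sub_pos.mpr hy
      positivity
    have : 0 ≤ B - E := by
      rw [hBE]; positivity
    linarith
  refine ⟨E / B, ?_, ?_⟩
  · rw [abs_div, abs_of_pos hE0, abs_of_pos hB0, div_le_one hB0]
    exact hEB
  · rw [mul_assoc, ← hB, div_mul_cancel₀ _ hB0.ne', hEdef]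
    ring

theorem stmt6 (D : ℕ) (hDsf : Squarefree D) (hD4 : D % 4 = 2 ∨ D % 4 = 3)
    (u : ℤ → ℤ) (c : ℤ → ℝ)
    (hc0 : c 0 = Real.sqrt D)
    (hu : ∀ i : ℤ, 0 ≤ i → u i = ⌊c i⌋)
    (hcrec : ∀ i : ℤ, 0 ≤ i → c (i + 1) = 1 / (c i - u i)) :
    ∀ i : ℤ, 0 ≤ i → ∃ ε : ℝ, |ε| ≤ 1 ∧
      1 / c i = (1 / (u i : ℝ)) * (1 - 1 / ((u i : ℝ) * (u (i + 1) : ℝ)))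
        + ε * (1 / ((u i : ℝ) ^ 2 * (u (i + 1) : ℝ) ^ 2)) * (1 / (u i : ℝ) + 1 / (u (i + 2) : ℝ)) := by
  have hD2 : 2 ≤ D := by omega
  have hDns : ¬ IsSquare D := by
    rintro ⟨r, rfl⟩
    have : IsUnit r := hDsf r ⟨1, by ring⟩
    rw [Nat.isUnit_iff] at this
    subst this
    omega
  have h0 : 1 < c 0 ∧ Irrational (c 0) := by
    rw [hc0]
    constructor
    · have h1 : (1:ℝ) < (D:ℝ) := by exact_mod_cast lt_of_lt_of_le one_lt_two hD2
      calc (1:ℝ) = Real.sqrt 1 := Real.sqrt_one.symm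
        _ < Real.sqrt D := Real.sqrt_lt_sqrt zero_le_one h1
    · exact irrational_sqrt_natCast_iff.mpr hDns
  have step : ∀ i : ℤ, 0 ≤ i → 1 < c i → Irrational (c i) →
      1 < c (i + 1) ∧ Irrational (c (i + 1)) := by
    intro i hi h1 hirr
    have hui : u i = ⌊c i⌋ := hu i hi
    have hne : c i ≠ (⌊c i⌋ : ℝ) := hirr.ne_int ⌊c i⌋
    have hf0 : 0 < c i - (u i : ℝ) := by
      rw [hui]
      have := Int.floor_le (c i)
      have := lt_of_le_of_ne this (Ne.symm hne)
      linarith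
    have hf1 : c i - (u i : ℝ) < 1 := by
      rw [hui]
      have := Int.lt_floor_add_one (c i)
      linarith
    rw [hcrec i hi]
    constructor
    · exact (one_lt_div hf0).mpr hf1
    · rw [one_div]
      exact (hirr.sub_intCast (u i)).inv
  have aux : ∀ i : ℤ, 0 ≤ i → 1 < c i ∧ Irrational (c i) := by
    intro i hi
    lift i to ℕ using hi
    induction i with
    | zero => exact_mod_cast h0
    | succ n ih =>
      have hn : (0:ℤ) ≤ (n:ℤ) := Int.natCast_nonneg n
      have ih' := ih
      have := step n hn ih'.1 ih'.2
      have hcast : ((n + 1 : ℕ) : ℤ) = (n : ℤ) + 1 := by push_cast; ring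
      rw [hcast]
      exact this
  intro i hi
  have h1 := aux i hi
  have h2 := aux (i + 1) (by omega)
  have h3 := aux (i + 2) (by omega)
  have rel : ∀ j : ℤ, 0 ≤ j → c j = (u j : ℝ) + 1 / c (j + 1) := by
    intro j hj
    have hirr := (aux j hj).2
    have hne : c j - (u j : ℝ) ≠ 0 := by
      rw [hu j hj]
      exact sub_ne_zero.mpr (hirr.ne_int ⌊c j⌋)
    rw [hcrec j hj, one_div_one_div]
    ring
  have hfloor_ge : ∀ j : ℤ, 0 ≤ j → (1:ℝ) ≤ (u j : ℝ) := by
    intro j hj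
    have : (1:ℤ) ≤ u j := by
      rw [hu j hj]
      exact Int.le_floor.mpr (by exact_mod_cast (aux j hj).1.le)
    exact_mod_cast this
  have ha := hfloor_ge i hi
  have hb := hfloor_ge (i + 1) (by omega)
  have hd := hfloor_ge (i + 2) (by omega)
  have hy : ((u (i + 2) : ℤ) : ℝ) < c (i + 2) := by
    rw [hu (i + 2) (by omega)]
    exact lt_of_le_of_ne (Int.floor_le _) (Ne.symm (h3.2.ne_int _))
  have hx : c (i + 1) = (u (i + 1) : ℝ) + 1 / c (i + 2) := by
    have := rel (i + 1) (by omega)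
    have heq : i + 1 + 1 = i + 2 := by ring
    rw [heq] at this
    exact this
  obtain ⟨ε, hε, heq⟩ := key_aux (u i : ℝ) (u (i + 1) : ℝ) (u (i + 2) : ℝ)
    (c (i + 1)) (c (i + 2)) ha hb hd hy hx
  refine ⟨ε, hε, ?_⟩
  rw [rel i hi]
  exact heq
end

section
/- For i ≥ 0 there exists ε with 0 < ε ≤ 1 such that N_i/(2√D) = 1/u_{i+1} − ε·(1/u_{i+1}²)·(1/u_i + 1/u_{i+2}); in particular N_i < 2√D/u_{i+1}. -/
open Real

noncomputable def betaAux (u : ℤ → ℤ) (x : ℝ) : ℕ → ℝ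
  | 0 => x
  | n+1 => 1 / ((u n : ℝ) + betaAux u x n)

set_option maxHeartbeats 1600000 in
theorem stmt8 (D : ℕ) (hDsf : Squarefree D) (hD4 : D % 4 = 2 ∨ D % 4 = 3)
    (u : ℤ → ℤ) (c : ℤ → ℝ)
    (hc0 : c 0 = Real.sqrt D)
    (hu : ∀ i : ℤ, 0 ≤ i → u i = ⌊c i⌋)
    (hcrec : ∀ i : ℤ, 0 ≤ i → c (i + 1) = 1 / (c i - u i))
    (p q : ℤ → ℤ)
    (hpm : p (-1) = 1) (hqm : q (-1) = 0)
    (hp0 : p 0 = u 0) (hq0 : q 0 = 1)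
    (hprec : ∀ i : ℤ, 0 ≤ i → p (i + 1) = u (i + 1) * p i + p (i - 1))
    (hqrec : ∀ i : ℤ, 0 ≤ i → q (i + 1) = u (i + 1) * q i + q (i - 1)) :
    ∀ i : ℤ, 0 ≤ i → ∃ ε : ℝ, 0 < ε ∧ ε ≤ 1 ∧
      |(p (i) : ℝ) ^ 2 - (D : ℝ) * (q (i) : ℝ) ^ 2| / (2 * Real.sqrt D)
        = 1 / (u (i + 1) : ℝ)
          - ε * (1 / (u (i + 1) : ℝ) ^ 2) * (1 / (u i : ℝ) + 1 / (u (i + 2) : ℝ)) ∧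
      |(p (i) : ℝ) ^ 2 - (D : ℝ) * (q (i) : ℝ) ^ 2| < 2 * Real.sqrt D / (u (i + 1) : ℝ) := by
  have hD2 : 2 ≤ D := by rcases hD4 with h | h <;> omega
  have hDpos : (0:ℝ) < (D:ℝ) := by positivity
  have hsq : Real.sqrt D ^ 2 = (D:ℝ) := Real.sq_sqrt (by positivity)
  have hxirr : Irrational (Real.sqrt D) := by
    refine irrational_sqrt_natCast_iff.mpr ?_
    rintro ⟨k, hk⟩
    have hkk : k * k ∣ D := by rw [hk]
    have hk1 : k = 1 := Nat.isUnit_iff.mp (hDsf k hkk)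
    rw [hk1] at hk
    omega
  have hx1 : 1 < Real.sqrt D := by
    have h1 : (1:ℝ) < (D:ℝ) := by exact_mod_cast (by omega : 1 < D)
    rw [show (1:ℝ) = Real.sqrt 1 by simp]
    exact Real.sqrt_lt_sqrt (by norm_num) h1
  -- basic properties of c and u along nonnegative indices
  have L1 : ∀ n : ℕ, Irrational (c n) ∧ 1 < c n := by
    intro n
    induction n with
    | zero => exact ⟨by simpa [hc0] using hxirr, by simpa [hc0] using hx1⟩
    | succ n ih =>
      obtain ⟨hirr, hgt⟩ := ih
      have hn0 : (0:ℤ) ≤ (n:ℤ) := Int.natCast_nonneg n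
      have hun : u n = ⌊c n⌋ := hu n hn0
      have hfrac : Irrational (c n - (u n : ℤ)) := hirr.sub_intCast _
      have hfpos : 0 < c n - (u n : ℝ) := by
        rw [hun]
        have := Int.floor_le (c n)
        have hne : c n ≠ (⌊c n⌋ : ℝ) := hirr.ne_int _
        push_cast
        cases' this.lt_or_eq with h h
        · linarith
        · exact absurd h.symm hne
      have hflt : c n - (u n : ℝ) < 1 := by
        rw [hun]
        have := Int.lt_floor_add_one (c n)
        linarith
      have hc1 : c ((n:ℤ)+1) = 1 / (c n - u n) := hcrec n hn0
      constructor
      · rw [show ((n+1:ℕ):ℤ) = (n:ℤ)+1 by push_cast; ring, hc1, one_div]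
        exact hfrac.inv
      · rw [show ((n+1:ℕ):ℤ) = (n:ℤ)+1 by push_cast; ring, hc1]
        rw [lt_div_iff₀ hfpos]
        linarith
  have hufacts : ∀ n : ℕ, (u n : ℝ) < c n ∧ c n < (u n : ℝ) + 1 ∧ (1:ℝ) ≤ (u n : ℝ) := by
    intro n
    obtain ⟨hirr, hgt⟩ := L1 n
    have hun : u n = ⌊c n⌋ := hu n (Int.natCast_nonneg n)
    have h1 : (u n : ℝ) < c n := by
      rw [hun]
      rcases (Int.floor_le (c n)).lt_or_eq with h | h
      · exact h
      · exact absurd h.symm (hirr.ne_int _)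
    have h2 : c n < (u n : ℝ) + 1 := by rw [hun]; exact Int.lt_floor_add_one _
    have h3 : (1:ℝ) ≤ (u n : ℝ) := by
      have : (1:ℤ) ≤ u n := by rw [hun]; exact Int.le_floor.mpr (by exact_mod_cast hgt.le)
      exact_mod_cast this
    exact ⟨h1, h2, h3⟩
  -- c n - u n = 1 / c (n+1)
  have hcd : ∀ n : ℕ, c n - (u n : ℝ) = 1 / c ((n:ℤ)+1) := by
    intro n
    have hc1 : c ((n:ℤ)+1) = 1 / (c n - u n) := hcrec n (Int.natCast_nonneg n)
    have hfpos : 0 < c n - (u n : ℝ) := by linarith [(hufacts n).1]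
    rw [hc1]
    field_simp
  -- abbreviations
  set x := Real.sqrt D with hxdef
  have hxpos : 0 < x := by linarith
  set e : ℤ → ℝ := fun i => (p i : ℝ) - x * (q i : ℝ) with he
  set s : ℤ → ℝ := fun i => (p i : ℝ) + x * (q i : ℝ) with hs
  set b : ℕ → ℝ := betaAux u x with hb
  have hb0 : b 0 = x := rfl
  have hbrec : ∀ n : ℕ, b (n+1) = 1 / ((u n : ℝ) + b n) := fun n => rfl
  have hbpos : ∀ n : ℕ, 0 < b n := by
    intro n
    induction n with
    | zero => simpa [hb0] using hxpos
    | succ n ih =>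
      rw [hbrec]
      have := (hufacts n).2.2
      positivity
  -- main invariant
  have key : ∀ n : ℕ,
      e n = - e ((n:ℤ)-1) / c ((n:ℤ)+1) ∧
      0 < s ((n:ℤ)-1) ∧ 0 < s n ∧
      s n * |e n| * (c ((n:ℤ)+1) + b (n+1)) = 2 * x ∧
      s ((n:ℤ)-1) * |e n| * (c ((n:ℤ)+1) + b (n+1)) = 2 * x * b (n+1) := by
    intro n
    induction n with
    | zero =>
      simp only [Nat.cast_zero]
      have hu0 : (u 0 : ℝ) < x := by simpa [hc0] using (hufacts 0).1
      have hu0' : (1:ℝ) ≤ (u 0 : ℝ) := (hufacts 0).2.2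
      have he0 : e 0 = (u 0 : ℝ) - x := by simp [he, hp0, hq0]
      have hem : e (-1) = 1 := by simp [he, hpm, hqm]
      have hsm : s (-1) = 1 := by simp [hs, hpm, hqm]
      have hs0 : s 0 = (u 0 : ℝ) + x := by simp [hs, hp0, hq0]
      have hc1 : c 1 = 1 / (x - u 0) := by
        have := hcrec 0 le_rfl
        simpa [hc0] using this
      have hxu : (0:ℝ) < x - u 0 := by linarith
      have hb1 : b 1 = 1 / ((u 0 : ℝ) + x) := by rw [hbrec, hb0]; norm_num
      have habs : |e 0| = x - (u 0 : ℝ) := by rw [he0, abs_of_nonpos (by linarith)]; ring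
      refine ⟨?_, by rw [show (0:ℤ) - 1 = -1 by norm_num, hsm]; norm_num,
        by rw [hs0]; linarith, ?_, ?_⟩
      · rw [show (0:ℤ) - 1 = -1 by norm_num, show (0:ℤ) + 1 = 1 by norm_num,
          he0, hem, hc1]
        field_simp
        ring
      · rw [show (0:ℤ) + 1 = 1 by norm_num, habs, hs0, hc1, hb1]
        have h1 : (u 0 : ℝ) + x ≠ 0 := by linarith
        field_simp
        nlinarith [hsq]
      · rw [show (0:ℤ) - 1 = -1 by norm_num, show (0:ℤ) + 1 = 1 by norm_num,
          habs, hsm, hc1, hb1]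
        have h1 : (u 0 : ℝ) + x ≠ 0 := by linarith
        field_simp
        nlinarith [hsq]
    | succ n ih =>
      obtain ⟨hE, hSm, hS, hA, hB⟩ := ih
      have hn0 : (0:ℤ) ≤ (n:ℤ) := Int.natCast_nonneg n
      have hcast : ((n+1:ℕ):ℤ) = (n:ℤ)+1 := by push_cast; ring
      have hcast2 : ((n+1:ℕ):ℤ)+1 = (n:ℤ)+2 := by push_cast; ring
      have hc1pos : 0 < c ((n:ℤ)+1) := by
        have := (L1 (n+1)).2; rw [hcast] at this; linarith
      have hc2pos : 0 < c ((n:ℤ)+2) := by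
        have := (L1 (n+2)).2
        rw [show ((n+2:ℕ):ℤ) = (n:ℤ)+2 by push_cast; ring] at this; linarith
      have hu1 : (1:ℝ) ≤ (u ((n:ℤ)+1) : ℝ) := by
        have := (hufacts (n+1)).2.2; rwa [hcast] at this
      -- c (n+1) - u (n+1) = 1 / c (n+2)
      have hcd1 : c ((n:ℤ)+1) - (u ((n:ℤ)+1) : ℝ) = 1 / c ((n:ℤ)+2) := by
        have h := hcd (n+1)
        push_cast at h
        rw [show ((n:ℤ)+1)+1 = (n:ℤ)+2 by ring] at h
        exact h
      -- recurrences for e and s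
      have hprec' : (p ((n:ℤ)+1) : ℝ) = (u ((n:ℤ)+1) : ℝ) * (p n : ℝ) + (p ((n:ℤ)-1) : ℝ) := by
        exact_mod_cast congrArg (fun z : ℤ => (z:ℝ)) (hprec n hn0)
      have hqrec' : (q ((n:ℤ)+1) : ℝ) = (u ((n:ℤ)+1) : ℝ) * (q n : ℝ) + (q ((n:ℤ)-1) : ℝ) := by
        exact_mod_cast congrArg (fun z : ℤ => (z:ℝ)) (hqrec n hn0)
      have hErec : e ((n:ℤ)+1) = (u ((n:ℤ)+1) : ℝ) * e n + e ((n:ℤ)-1) := by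
        simp only [he, hprec', hqrec']; ring
      have hSrec : s ((n:ℤ)+1) = (u ((n:ℤ)+1) : ℝ) * s n + s ((n:ℤ)-1) := by
        simp only [hs, hprec', hqrec']; ring
      -- e (n-1) = - c(n+1) * e n
      have hc1ne : c ((n:ℤ)+1) ≠ 0 := ne_of_gt hc1pos
      have hc2ne : c ((n:ℤ)+2) ≠ 0 := ne_of_gt hc2pos
      have hEm : e ((n:ℤ)-1) = - c ((n:ℤ)+1) * e n := by
        rw [hE]; field_simp
      have hEnew : e ((n:ℤ)+1) = - e n / c ((n:ℤ)+2) := by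
        rw [hErec, hEm]
        have hkey : (u ((n:ℤ)+1) : ℝ) - c ((n:ℤ)+1) = - (1 / c ((n:ℤ)+2)) := by
          rw [← hcd1]; ring
        calc (u ((n:ℤ)+1) : ℝ) * e ↑n + - c ((n:ℤ)+1) * e ↑n
            = ((u ((n:ℤ)+1) : ℝ) - c ((n:ℤ)+1)) * e ↑n := by ring
          _ = - (1 / c ((n:ℤ)+2)) * e ↑n := by rw [hkey]
          _ = - e ↑n / c ((n:ℤ)+2) := by ring
      have hSnew : 0 < s ((n:ℤ)+1) := by
        rw [hSrec]
        have h1 : 0 < (u ((n:ℤ)+1) : ℝ) * s ↑n := mul_pos (by linarith) hS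
        linarith
      have habs : |e ((n:ℤ)+1)| = |e n| / c ((n:ℤ)+2) := by
        rw [hEnew, abs_div, abs_neg, abs_of_pos hc2pos]
      -- beta identity: c2 + b2 = b2 * c2 * (c1 + b1)
      set b1 := b (n+1) with hb1d
      set b2 := b (n+2) with hb2d
      have hb1pos : 0 < b1 := hbpos (n+1)
      have hb2def : b2 = 1 / ((u ((n:ℤ)+1) : ℝ) + b1) := by
        rw [hb2d, hbrec (n+1), hcast]
      have hub1 : (0:ℝ) < (u ((n:ℤ)+1) : ℝ) + b1 := by linarith
      have hb2pos : 0 < b2 := by rw [hb2def]; positivity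
      have hstar : c ((n:ℤ)+2) + b2 = b2 * c ((n:ℤ)+2) * (c ((n:ℤ)+1) + b1) := by
        have hc1eq : c ((n:ℤ)+1) = (u ((n:ℤ)+1) : ℝ) + 1 / c ((n:ℤ)+2) := by
          have := hcd1; linarith
        rw [hb2def, hc1eq]
        field_simp [ne_of_gt hub1]
        ring
      have hcbpos : 0 < c ((n:ℤ)+1) + b1 := by linarith
      -- new A6 : s n * |e(n+1)| * (c(n+2)+b2) = 2x * b2
      have hA6 : s n * |e ((n:ℤ)+1)| * (c ((n:ℤ)+2) + b2) = 2 * x * b2 := by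
        rw [habs, hstar]
        have hre : s ↑n * (|e ↑n| / c ((n:ℤ)+2)) * (b2 * c ((n:ℤ)+2) * (c ((n:ℤ)+1) + b1))
            = b2 * (s ↑n * |e ↑n| * (c ((n:ℤ)+1) + b1)) := by
          field_simp [hc2ne]
        rw [hre, hA]
        ring
      have hB6 : s ((n:ℤ)-1) * |e ((n:ℤ)+1)| * (c ((n:ℤ)+2) + b2) = 2 * x * b1 * b2 := by
        rw [habs, hstar]
        have hre : s ((n:ℤ)-1) * (|e ↑n| / c ((n:ℤ)+2)) * (b2 * c ((n:ℤ)+2) * (c ((n:ℤ)+1) + b1))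
            = b2 * (s ((n:ℤ)-1) * |e ↑n| * (c ((n:ℤ)+1) + b1)) := by
          field_simp [hc2ne]
        rw [hre, hB]
        ring
      have hA5 : s ((n:ℤ)+1) * |e ((n:ℤ)+1)| * (c ((n:ℤ)+2) + b2) = 2 * x := by
        rw [hSrec]
        have expand : ((u ((n:ℤ)+1) : ℝ) * s n + s ((n:ℤ)-1)) * |e ((n:ℤ)+1)| * (c ((n:ℤ)+2) + b2)
            = (u ((n:ℤ)+1) : ℝ) * (s n * |e ((n:ℤ)+1)| * (c ((n:ℤ)+2) + b2))
              + s ((n:ℤ)-1) * |e ((n:ℤ)+1)| * (c ((n:ℤ)+2) + b2) := by ring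
        rw [expand, hA6, hB6]
        have hone : b2 * ((u ((n:ℤ)+1) : ℝ) + b1) = 1 := by
          rw [hb2def]; field_simp
        linear_combination (2*x) * hone
      refine ⟨?_, ?_, hSnew, ?_, ?_⟩
      · rw [hcast, show (n:ℤ)+1-1 = (n:ℤ) by ring, show (n:ℤ)+1+1 = (n:ℤ)+2 by ring]
        exact hEnew
      · rw [hcast, show (n:ℤ)+1-1 = (n:ℤ) by ring]; exact hS
      · rw [hcast, show (n:ℤ)+1+1 = (n:ℤ)+2 by ring]; exact hA5
      · rw [hcast, show (n:ℤ)+1-1 = (n:ℤ) by ring, show (n:ℤ)+1+1 = (n:ℤ)+2 by ring]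
        exact hA6
  -- now the main statement
  intro i hi
  obtain ⟨n, rfl⟩ : ∃ n : ℕ, i = (n : ℤ) := ⟨i.toNat, (Int.toNat_of_nonneg hi).symm⟩
  obtain ⟨hE, hSm, hS, hA, hB⟩ := key n
  set b1 := b (n+1) with hb1d
  have hb1pos : 0 < b1 := hbpos (n+1)
  have hc1pos : 0 < c ((n:ℤ)+1) := by
    have := (L1 (n+1)).2; rw [show ((n+1:ℕ):ℤ) = (n:ℤ)+1 by push_cast; ring] at this; linarith
  have hcb : 0 < c ((n:ℤ)+1) + b1 := by linarith
  -- N = |p² - D q²| = s * |e|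
  have hN : |(p (n:ℤ) : ℝ)^2 - (D:ℝ) * (q (n:ℤ) : ℝ)^2| = s (n:ℤ) * |e (n:ℤ)| := by
    have : (p (n:ℤ) : ℝ)^2 - (D:ℝ) * (q (n:ℤ) : ℝ)^2 = s (n:ℤ) * e (n:ℤ) := by
      simp only [hs, he]
      linear_combination (((q (n:ℤ) : ℝ))^2) * hsq
    rw [this, abs_mul, abs_of_pos hS]
  set N := |(p (n:ℤ) : ℝ)^2 - (D:ℝ) * (q (n:ℤ) : ℝ)^2| with hNd
  have hNval : N * (c ((n:ℤ)+1) + b1) = 2 * x := by rw [hN]; exact hA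
  have hNeq : N = 2 * x / (c ((n:ℤ)+1) + b1) := by
    field_simp at hNval ⊢; linarith [hNval]
  -- u facts at n, n+1, n+2
  have hu0 : (1:ℝ) ≤ (u (n:ℤ) : ℝ) := (hufacts n).2.2
  have hu1 : (1:ℝ) ≤ (u ((n:ℤ)+1) : ℝ) := by
    have := (hufacts (n+1)).2.2; rwa [show ((n+1:ℕ):ℤ) = (n:ℤ)+1 by push_cast; ring] at this
  have hu2 : (1:ℝ) ≤ (u ((n:ℤ)+2) : ℝ) := by
    have := (hufacts (n+2)).2.2; rwa [show ((n+2:ℕ):ℤ) = (n:ℤ)+2 by push_cast; ring] at this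
  have hc2gt : (u ((n:ℤ)+2) : ℝ) < c ((n:ℤ)+2) := by
    have := (hufacts (n+2)).1; rwa [show ((n+2:ℕ):ℤ) = (n:ℤ)+2 by push_cast; ring] at this
  have hc2pos : 0 < c ((n:ℤ)+2) := by linarith
  have hcd1 : c ((n:ℤ)+1) - (u ((n:ℤ)+1) : ℝ) = 1 / c ((n:ℤ)+2) := by
    have := hcd (n+1)
    rwa [show ((n+1:ℕ):ℤ) = (n:ℤ)+1 by push_cast; ring,
      show ((n:ℤ)+1)+1 = (n:ℤ)+2 by ring] at this
  have hc1gtu : (u ((n:ℤ)+1) : ℝ) < c ((n:ℤ)+1) := by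
    have : 0 < 1 / c ((n:ℤ)+2) := by positivity
    linarith
  -- b1 < 1 / u n
  have hb1lt : b1 < 1 / (u (n:ℤ) : ℝ) := by
    have hbn : 0 < b n := hbpos n
    rw [hb1d, hbrec n]
    have h1 : (0:ℝ) < (u (n:ℤ) : ℝ) := by linarith
    rw [div_lt_div_iff₀ (by linarith) h1]
    nlinarith
  -- key inequalities
  set U := (u ((n:ℤ)+1) : ℝ) with hUd
  have hUpos : 0 < U := by linarith
  have hcbU : U < c ((n:ℤ)+1) + b1 := by linarith
  set S := 1 / (u (n:ℤ) : ℝ) + 1 / (u ((n:ℤ)+2) : ℝ) with hSd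
  have hSpos : 0 < S := by rw [hSd]; positivity
  -- difference
  have hdiff : 1 / U - N / (2 * x) = (c ((n:ℤ)+1) + b1 - U) / (U * (c ((n:ℤ)+1) + b1)) := by
    rw [hNeq]
    field_simp
  have hdiffpos : 0 < 1 / U - N / (2 * x) := by
    rw [hdiff]
    have : 0 < c ((n:ℤ)+1) + b1 - U := by linarith
    positivity
  have hgap : c ((n:ℤ)+1) + b1 - U < S := by
    have h1 : c ((n:ℤ)+1) - U = 1 / c ((n:ℤ)+2) := hcd1
    have h2 : 1 / c ((n:ℤ)+2) < 1 / (u ((n:ℤ)+2) : ℝ) := by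
      apply one_div_lt_one_div_of_lt (by linarith) hc2gt
    rw [hSd]; linarith
  have hle : (1 / U - N / (2 * x)) * U^2 < S := by
    rw [hdiff]
    have key2 : (c ((n:ℤ)+1) + b1 - U) / (U * (c ((n:ℤ)+1) + b1)) * U^2
        = (c ((n:ℤ)+1) + b1 - U) * (U / (c ((n:ℤ)+1) + b1)) := by
      field_simp
    rw [key2]
    have hUfrac : U / (c ((n:ℤ)+1) + b1) < 1 := by
      rw [div_lt_one (by linarith)]; exact hcbU
    have hpos2 : 0 < c ((n:ℤ)+1) + b1 - U := by linarith
    calc (c ((n:ℤ)+1) + b1 - U) * (U / (c ((n:ℤ)+1) + b1))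
        < (c ((n:ℤ)+1) + b1 - U) * 1 := by
          apply mul_lt_mul_of_pos_left hUfrac hpos2
      _ = c ((n:ℤ)+1) + b1 - U := by ring
      _ < S := hgap
  -- define epsilon
  refine ⟨(1 / U - N / (2 * x)) * U^2 / S, by positivity, ?_, ?_, ?_⟩
  · rw [div_le_one hSpos]; exact hle.le
  · have hU2 : (U:ℝ)^2 ≠ 0 := by positivity
    have hSne : S ≠ 0 := ne_of_gt hSpos
    have hthis : (1 / U - N / (2 * x)) * U ^ 2 / S * (1 / U ^ 2) * S = 1 / U - N / (2 * x) := by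
      field_simp
    rw [hthis]
    ring
  · rw [hNeq]
    rw [div_lt_div_iff₀ (by linarith) hUpos]
    have : 0 < 2 * x := by linarith
    nlinarith
end

section
/- If u ∈ ℕ satisfies u_{i-1}, u_i, u_{i+1}, u_{i+2}, u_{i+3} ≥ u, then there exists ε with |ε| ≤ 1 such that N_i/(2√D) = (1/u_{i+1})(1 − 1/(u_i u_{i+1}) − 1/(u_{i+1} u_{i+2})) + 10ε/u⁵. -/
open Real

set_option maxHeartbeats 1000000

theorem stmt9 (D : ℕ) (hDsf : Squarefree D) (hD4 : D % 4 = 2 ∨ D % 4 = 3)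
    (u : ℤ → ℤ) (c : ℤ → ℝ)
    (hc0 : c 0 = Real.sqrt D)
    (hu : ∀ i : ℤ, 0 ≤ i → u i = ⌊c i⌋)
    (hcrec : ∀ i : ℤ, 0 ≤ i → c (i + 1) = 1 / (c i - u i))
    (p q : ℤ → ℤ)
    (hpm : p (-1) = 1) (hqm : q (-1) = 0)
    (hp0 : p 0 = u 0) (hq0 : q 0 = 1)
    (hprec : ∀ i : ℤ, 0 ≤ i → p (i + 1) = u (i + 1) * p i + p (i - 1))
    (hqrec : ∀ i : ℤ, 0 ≤ i → q (i + 1) = u (i + 1) * q i + q (i - 1)) :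
    ∀ i : ℤ, 1 ≤ i → ∀ v : ℕ, 1 ≤ v →
      ((v : ℤ) ≤ u (i - 1) ∧ (v : ℤ) ≤ u i ∧ (v : ℤ) ≤ u (i + 1) ∧
        (v : ℤ) ≤ u (i + 2) ∧ (v : ℤ) ≤ u (i + 3)) →
      ∃ ε : ℝ, |ε| ≤ 1 ∧
        |(p (i) : ℝ) ^ 2 - (D : ℝ) * (q (i) : ℝ) ^ 2| / (2 * Real.sqrt D)
          = (1 / (u (i + 1) : ℝ))
              * (1 - 1 / ((u i : ℝ) * (u (i + 1) : ℝ)) - 1 / ((u (i + 1) : ℝ) * (u (i + 2) : ℝ)))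
            + 10 * ε / (v : ℝ) ^ 5 := by
  have hD2 : 2 ≤ D := by rcases hD4 with h | h <;> omega
  have hDnsq : ¬ IsSquare D := by
    rintro ⟨r, hr⟩
    have hun : IsUnit r := hDsf r (by rw [hr])
    have hr1 : r = 1 := Nat.isUnit_iff.mp hun
    subst hr1
    simp at hr
    omega
  have hirrD : Irrational (Real.sqrt D) := irrational_sqrt_natCast_iff.mpr hDnsq
  have hDR : (1:ℝ) ≤ (D:ℝ) := by exact_mod_cast Nat.one_le_iff_ne_zero.mpr (by omega)
  have hsq : Real.sqrt D ^ 2 = D := Real.sq_sqrt (by positivity)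
  have hsqrtD_pos : 0 < Real.sqrt D := Real.sqrt_pos.mpr (by positivity)
  have hsqrtD1 : 1 ≤ Real.sqrt D := by nlinarith [hsqrtD_pos]
  -- irrationality and lower bounds for the complete quotients
  have hcI : ∀ j : ℤ, 0 ≤ j → Irrational (c j) ∧ (1 ≤ j → 1 < c j) := by
    refine Int.le_induction ⟨by rwa [hc0], by omega⟩ ?_
    · intro n hn ih
      obtain ⟨h1, _⟩ := ih
      have hfl : (u n : ℝ) = (⌊c n⌋ : ℝ) := by rw [hu n hn]
      have hle : (⌊c n⌋ : ℝ) ≤ c n := Int.floor_le _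
      have hlt : c n < ⌊c n⌋ + 1 := Int.lt_floor_add_one _
      have hne : c n ≠ (⌊c n⌋ : ℝ) := h1.ne_int _
      have hpos : 0 < c n - u n := by rw [hfl]; cases lt_or_eq_of_le hle with
        | inl h => linarith
        | inr h => exact absurd h.symm hne
      have hlt1 : c n - u n < 1 := by rw [hfl]; linarith
      have hrec := hcrec n hn
      constructor
      · rw [hrec, one_div]
        exact ((Irrational.sub_intCast h1 (u n)).inv)
      · intro _
        rw [hrec]
        rw [lt_div_iff₀ hpos]
        linarith
  have hcpos : ∀ j : ℤ, 0 ≤ j → 0 < c j := by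
    intro j hj
    rcases eq_or_lt_of_le hj with h | h
    · rw [← h, hc0]; exact hsqrtD_pos
    · linarith [(hcI j hj).2 h]
  have hfrac : ∀ j : ℤ, 0 ≤ j → 0 < c j - u j ∧ c j - u j < 1 := by
    intro j hj
    have h1 := (hcI j hj).1
    have hfl : (u j : ℝ) = (⌊c j⌋ : ℝ) := by rw [hu j hj]
    have hle : (⌊c j⌋ : ℝ) ≤ c j := Int.floor_le _
    have hlt : c j < ⌊c j⌋ + 1 := Int.lt_floor_add_one _
    have hne : c j ≠ (⌊c j⌋ : ℝ) := h1.ne_int _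
    constructor
    · rw [hfl]; cases lt_or_eq_of_le hle with
      | inl h => linarith
      | inr h => exact absurd h.symm hne
    · rw [hfl]; linarith
  have hckey : ∀ j : ℤ, 0 ≤ j → c j - u j = 1 / c (j + 1) := by
    intro j hj
    have h := hcrec j hj
    have hp := (hfrac j hj).1
    rw [h]
    rw [one_div_one_div]
  have hu1 : ∀ j : ℤ, 0 ≤ j → 1 ≤ u j := by
    intro j hj
    rcases eq_or_lt_of_le hj with h | h
    · rw [← h, hu 0 le_rfl]
      have : (1:ℝ) ≤ c 0 := by rw [hc0]; exact hsqrtD1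
      exact Int.le_floor.mpr (by exact_mod_cast this)
    · rw [hu j hj]
      exact Int.le_floor.mpr (by exact_mod_cast ((hcI j hj).2 h).le)
  have hucast : ∀ j : ℤ, 0 ≤ j → (u j : ℝ) ≤ c j := by
    intro j hj
    linarith [(hfrac j hj).1]
  -- positivity of q
  have hq : ∀ j : ℤ, 0 ≤ j → 0 ≤ q (j - 1) ∧ 1 ≤ q j := by
    refine Int.le_induction (by norm_num [hqm, hq0]) ?_
    · intro n hn ih
      obtain ⟨h0, h1⟩ := ih
      have hr := hqrec n hn
      have hu' := hu1 (n + 1) (by omega)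
      constructor
      · simp only [add_sub_cancel_right]; omega
      · rw [hr]; nlinarith
  -- the key identity
  have K : ∀ j : ℤ, 0 ≤ j →
      Real.sqrt D * (c (j + 1) * q j + q (j - 1)) = c (j + 1) * p j + p (j - 1) := by
    refine Int.le_induction ?_ ?_
    · have h0 := hckey 0 le_rfl
      have hc1 : 0 < c 1 := hcpos 1 (by omega)
      rw [hc0, zero_add] at h0
      rw [show (0:ℤ) - 1 = -1 by norm_num, zero_add]
      simp only [hqm, hq0, hpm, hp0]
      push_cast
      field_simp at h0 ⊢
      linear_combination h0
    · intro n hn ih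
      have h0 := hckey (n + 1) (by omega)
      have hc2 : 0 < c (n + 1 + 1) := hcpos (n + 1 + 1) (by omega)
      have hpr := hprec n hn
      have hqr := hqrec n hn
      have e1 : c (n + 1) = (u (n + 1) : ℝ) + 1 / c (n + 1 + 1) := by linarith
      rw [e1] at ih
      simp only [add_sub_cancel_right, hpr, hqr]
      push_cast at ih ⊢
      field_simp at ih ⊢
      linear_combination ih
  -- the determinant squared is 1
  have det : ∀ j : ℤ, 0 ≤ j → (p j * q (j - 1) - p (j - 1) * q j) ^ 2 = 1 := by
    refine Int.le_induction ?_ ?_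
    · rw [show (0:ℤ) - 1 = -1 by norm_num]
      simp only [hpm, hqm, hp0, hq0]
      ring
    · intro n hn ih
      have hpr := hprec n hn
      have hqr := hqrec n hn
      simp only [add_sub_cancel_right, hpr, hqr]
      linear_combination ih
  -- now the main argument
  intro i hi v hv ⟨hv1, hv2, hv3, hv4, hv5⟩
  set V : ℝ := (v : ℝ) with hVdef
  set A1 : ℝ := (u (i - 1) : ℝ) with hA1def
  set A2 : ℝ := (u i : ℝ) with hA2def
  set A3 : ℝ := (u (i + 1) : ℝ) with hA3def
  set A4 : ℝ := (u (i + 2) : ℝ) with hA4def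
  set A5 : ℝ := (u (i + 3) : ℝ) with hA5def
  set Q0 : ℝ := (q (i - 2) : ℝ) with hQ0def
  set Q1 : ℝ := (q (i - 1) : ℝ) with hQ1def
  set Q2 : ℝ := (q i : ℝ) with hQ2def
  set C2 : ℝ := c (i + 1) with hC2def
  set C3 : ℝ := c (i + 2) with hC3def
  set C4 : ℝ := c (i + 3) with hC4def
  clear_value V A1 A2 A3 A4 A5 Q0 Q1 Q2 C2 C3 C4
  have hV1 : (1 : ℝ) ≤ V := by rw [hVdef]; exact_mod_cast hv
  have hVpos : (0 : ℝ) < V := by linarith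
  have hB1 : V ≤ A1 := by rw [hVdef, hA1def]; exact_mod_cast hv1
  have hB2 : V ≤ A2 := by rw [hVdef, hA2def]; exact_mod_cast hv2
  have hB3 : V ≤ A3 := by rw [hVdef, hA3def]; exact_mod_cast hv3
  have hB4 : V ≤ A4 := by rw [hVdef, hA4def]; exact_mod_cast hv4
  have hB5 : V ≤ A5 := by rw [hVdef, hA5def]; exact_mod_cast hv5
  have hVne : V ≠ 0 := ne_of_gt hVpos
  have hA2pos : (0:ℝ) < A2 := by linarith
  have hA3pos : (0:ℝ) < A3 := by linarith
  have hA4pos : (0:ℝ) < A4 := by linarith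
  have hQ1ge : (1 : ℝ) ≤ Q1 := by rw [hQ1def]; exact_mod_cast (hq (i - 1) (by omega)).2
  have hQ2ge : (1 : ℝ) ≤ Q2 := by rw [hQ2def]; exact_mod_cast (hq i (by omega)).2
  have hQ0nn : (0 : ℝ) ≤ Q0 := by
    have h := (hq (i - 1) (by omega)).1
    rw [show i - 1 - 1 = i - 2 by ring] at h
    rw [hQ0def]; exact_mod_cast h
  have hqr2 : Q2 = A2 * Q1 + Q0 := by
    have h := hqrec (i - 1) (by omega)
    rw [show i - 1 + 1 = i by ring, show i - 1 - 1 = i - 2 by ring] at h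
    rw [hQ2def, hA2def, hQ1def, hQ0def]; exact_mod_cast h
  have hC2eq : C2 = A3 + 1 / C3 := by
    have h := hckey (i + 1) (by omega)
    rw [show i + 1 + 1 = i + 2 by ring] at h
    rw [← hC2def, ← hA3def, ← hC3def] at h
    linarith
  have hC3eq : C3 = A4 + 1 / C4 := by
    have h := hckey (i + 2) (by omega)
    rw [show i + 2 + 1 = i + 3 by ring] at h
    rw [← hC3def, ← hA4def, ← hC4def] at h
    linarith
  have hC4ge : V ≤ C4 := by
    have h := hucast (i + 3) (by omega)
    rw [← hA5def, ← hC4def] at h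
    exact le_trans hB5 h
  have hC4pos : (0 : ℝ) < C4 := by linarith
  have hC3ge : A4 ≤ C3 := by
    have h := hucast (i + 2) (by omega)
    rw [← hA4def, ← hC3def] at h
    exact h
  have hC3pos : (0 : ℝ) < C3 := by linarith
  have hC2ge : A3 ≤ C2 := by
    have h := hucast (i + 1) (by omega)
    rw [← hA3def, ← hC2def] at h
    exact h
  have hC2pos : (0 : ℝ) < C2 := by linarith
  -- the auxiliary quantities
  set s : ℝ := 1 / C3 with hsdef
  set r : ℝ := Q1 / Q2 with hrdef
  set x : ℝ := A3 + (s + r) with hxdef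
  set M : ℝ := C2 * Q2 + Q1 with hMdef
  clear_value s r x M
  have hQ2pos : (0 : ℝ) < Q2 := by linarith
  have hs_pos : 0 < s := by rw [hsdef]; exact div_pos one_pos hC3pos
  have hr_pos : 0 < r := by rw [hrdef]; exact div_pos (by linarith) hQ2pos
  have hs_le : s ≤ 1 / A4 := by
    rw [hsdef]
    apply one_div_le_one_div_of_le (by linarith) hC3ge
  have hr_le : r ≤ 1 / A2 := by
    rw [hrdef, div_le_div_iff₀ hQ2pos (by linarith)]
    have h : Q1 * A2 = A2 * Q1 := mul_comm _ _
    linarith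
  have hs_lb : 1 / A4 - s ≤ 1 / V ^ 3 := by
    have eC : C3 * C4 = A4 * C4 + 1 := by
      rw [hC3eq]
      field_simp
    have he : 1 / A4 - s = 1 / (C4 * A4 * C3) := by
      rw [hsdef, div_sub_div _ _ (ne_of_gt hA4pos) (ne_of_gt hC3pos),
        div_eq_div_iff (ne_of_gt (mul_pos hA4pos hC3pos))
          (ne_of_gt (mul_pos (mul_pos hC4pos hA4pos) hC3pos))]
      linear_combination (A4 * C3) * eC
    rw [he]
    apply one_div_le_one_div_of_le (pow_pos hVpos 3)
    calc V ^ 3 = V * V * V := by ring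
      _ ≤ C4 * A4 * C3 := by
          have t1 : V * V ≤ C4 * A4 := mul_le_mul hC4ge hB4 (by linarith) (by linarith)
          exact mul_le_mul t1 (by linarith) (by linarith)
            (le_of_lt (mul_pos hC4pos hA4pos))
  have hxpos : 0 < x := by rw [hxdef]; linarith
  have hxM : M = x * Q2 := by
    rw [hMdef, hxdef, hC2eq, hrdef]
    field_simp
    ring
  have hMpos : 0 < M := by
    rw [hMdef]
    have := mul_pos hC2pos hQ2pos
    linarith
  have hQ2V : V ≤ Q2 := by
    have h2 : V * 1 ≤ A2 * Q1 := mul_le_mul hB2 hQ1ge (by norm_num) (by linarith)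
    have h3 := hqr2
    linarith
  have hMge : V * V ≤ M := by
    rw [hMdef]
    have h1 : V * V ≤ C2 * Q2 :=
      mul_le_mul (le_trans hB3 hC2ge) hQ2V (by linarith) (by linarith)
    linarith
  -- case analysis for two bounds
  have hcase : (Q0 = 0 ∧ V ≤ 2 * Real.sqrt D) ∨ ((1:ℝ) ≤ Q0 ∧ A1 * Q0 ≤ Q1) := by
    rcases eq_or_lt_of_le hi with h1 | h2
    · left
      constructor
      · rw [hQ0def, show i - 2 = -1 by omega, hqm]; norm_num
      · -- here i = 1 : use c 1 ≤ 2 √D and u 1 ≥ V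
        have hu0lt : (u 0 : ℝ) < Real.sqrt D := by
          rcases lt_or_eq_of_le (by rw [hu 0 le_rfl, ← hc0]; exact Int.floor_le _ :
              (u 0 : ℝ) ≤ Real.sqrt D) with h | h
          · exact h
          · exact absurd h.symm (hirrD.ne_int _)
        have hu0pos : (1 : ℝ) ≤ (u 0 : ℝ) := by exact_mod_cast hu1 0 le_rfl
        have hu0sq : (u 0 : ℝ) ^ 2 + 1 ≤ (D : ℝ) := by
          have h1 : (u 0 : ℤ) ^ 2 < (D : ℤ) := by
            have : ((u 0 : ℝ)) ^ 2 < (D : ℝ) := by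
              have h5 : (u 0 : ℝ) ^ 2 < Real.sqrt D ^ 2 := by
                rw [sq, sq]
                exact mul_self_lt_mul_self (by linarith) hu0lt
              linarith [hsq]
            exact_mod_cast this
          have h2 : (u 0 : ℤ) ^ 2 + 1 ≤ (D : ℤ) := by omega
          exact_mod_cast h2
        have hd_pos : 0 < Real.sqrt D - (u 0 : ℝ) := by linarith
        have hdl : 1 ≤ 2 * Real.sqrt D * (Real.sqrt D - (u 0 : ℝ)) := by
          have key : 2 * Real.sqrt D * (Real.sqrt D - (u 0 : ℝ))
              = ((D : ℝ) - (u 0 : ℝ) ^ 2) + (Real.sqrt D - (u 0 : ℝ)) ^ 2 := by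
            linear_combination hsq
          have h6 := sq_nonneg (Real.sqrt D - (u 0 : ℝ))
          linarith
        have hc1le : c 1 ≤ 2 * Real.sqrt D := by
          have h := hcrec 0 le_rfl
          rw [hc0] at h
          rw [show (0:ℤ) + 1 = 1 by norm_num] at h
          rw [h, div_le_iff₀ hd_pos]
          linarith
        have hc1ge : A2 ≤ c 1 := by
          rw [hA2def, ← h1]
          exact hucast 1 (by omega)
        linarith
    · right
      have hQ0ge : (1 : ℝ) ≤ Q0 := by
        rw [hQ0def]; exact_mod_cast (hq (i - 2) (by omega)).2
      refine ⟨hQ0ge, ?_⟩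
      have h := hqrec (i - 2) (by omega)
      rw [show i - 2 + 1 = i - 1 by ring, show i - 2 - 1 = i - 3 by ring] at h
      have h3 : (0 : ℤ) ≤ q (i - 3) := by
        have := (hq (i - 2) (by omega)).1
        rwa [show i - 2 - 1 = i - 3 by ring] at this
      have : A1 * Q0 + (q (i - 3) : ℝ) = Q1 := by
        rw [hA1def, hQ0def, hQ1def]; exact_mod_cast h.symm
      have h4 : (0:ℝ) ≤ (q (i - 3) : ℝ) := by exact_mod_cast h3
      linarith
  have hr_lb : 1 / A2 - r ≤ 1 / V ^ 3 := by
    have he : 1 / A2 - r = Q0 / (A2 * Q2) := by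
      rw [hrdef, hqr2]
      field_simp
      ring
    rw [he]
    rcases hcase with ⟨h0, _⟩ | ⟨h1, h2⟩
    · rw [h0, zero_div]
      exact le_of_lt (div_pos one_pos (pow_pos hVpos 3))
    · rw [div_le_div_iff₀ (mul_pos hA2pos hQ2pos) (pow_pos hVpos 3)]
      have e1 : V * Q0 ≤ Q1 := le_trans (mul_le_mul_of_nonneg_right hB1 hQ0nn) h2
      have e2 : V * (V * Q0) ≤ A2 * Q1 :=
        mul_le_mul hB2 e1 (mul_nonneg hVpos.le hQ0nn) (by linarith)
      have e3 : V * (V * (V * Q0)) ≤ A2 * (A2 * Q1) :=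
        mul_le_mul hB2 e2 (mul_nonneg hVpos.le (mul_nonneg hVpos.le hQ0nn)) (by linarith)
      have e4 : A2 * (A2 * Q1) ≤ A2 * Q2 := by
        apply mul_le_mul_of_nonneg_left _ (by linarith : (0:ℝ) ≤ A2)
        linarith [hqr2]
      have e5 : Q0 * V ^ 3 = V * (V * (V * Q0)) := by ring
      linarith
  have hM5 : V ^ 5 ≤ 2 * Real.sqrt D * M ^ 2 := by
    rcases hcase with ⟨_, h0⟩ | ⟨h1, h2⟩
    · have hM2 : V ^ 4 ≤ M ^ 2 := by
        calc V ^ 4 = (V * V) ^ 2 := by ring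
          _ ≤ M ^ 2 := by
              apply pow_le_pow_left₀ (le_of_lt (mul_pos hVpos hVpos)) hMge
      calc V ^ 5 = V * V ^ 4 := by ring
        _ ≤ (2 * Real.sqrt D) * M ^ 2 :=
            mul_le_mul h0 hM2 (by positivity) (by positivity)
        _ = 2 * Real.sqrt D * M ^ 2 := by ring
    · have hq1b : V * Q0 ≤ Q1 := le_trans
        (mul_le_mul_of_nonneg_right hB1 hQ0nn) h2
      have hQ2b : V * V ≤ Q2 := by
        have e1 : V * V ≤ V * (V * Q0) := by
          have e0 : V * (V * Q0) = V * V * Q0 := by ring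
          have e0b : V * V * 1 ≤ V * V * Q0 :=
            mul_le_mul_of_nonneg_left h1 (le_of_lt (mul_pos hVpos hVpos))
          linarith
        have e2 : V * (V * Q0) ≤ A2 * Q1 :=
          mul_le_mul hB2 hq1b (mul_nonneg hVpos.le hQ0nn) (by linarith)
        linarith [hqr2, hQ0nn]
      have hMb : V ^ 3 ≤ M := by
        rw [hMdef]
        have h1 : V * (V * V) ≤ C2 * Q2 :=
          mul_le_mul (le_trans hB3 hC2ge) hQ2b (le_of_lt (mul_pos hVpos hVpos)) (by linarith)
        have e : V ^ 3 = V * (V * V) := by ring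
        linarith
      have hM2 : V ^ 6 ≤ M ^ 2 := by
        calc V ^ 6 = (V ^ 3) ^ 2 := by ring
          _ ≤ M ^ 2 := pow_le_pow_left₀ (pow_nonneg hVpos.le 3) hMb 2
      have hV56 : V ^ 5 ≤ V ^ 6 := by
        calc V ^ 5 = V ^ 5 * 1 := by ring
          _ ≤ V ^ 5 * V := by
              apply mul_le_mul_of_nonneg_left hV1 (pow_nonneg hVpos.le 5)
          _ = V ^ 6 := by ring
      have hsd2 : (1:ℝ) ≤ 2 * Real.sqrt D := by linarith
      calc V ^ 5 ≤ V ^ 6 := hV56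
        _ ≤ M ^ 2 := hM2
        _ = 1 * M ^ 2 := by ring
        _ ≤ (2 * Real.sqrt D) * M ^ 2 :=
            mul_le_mul_of_nonneg_right hsd2 (sq_nonneg M)
        _ = 2 * Real.sqrt D * M ^ 2 := by ring
  -- the target main term
  set T : ℝ := (1 / A3) * (1 - 1 / (A2 * A3) - 1 / (A3 * A4)) with hTdef
  clear_value T
  have hTid : 1 / x - T
      = (s + r) ^ 2 / (A3 ^ 2 * x) + ((1 / A2 - r) + (1 / A4 - s)) / A3 ^ 2 := by
    rw [hTdef, hxdef]
    field_simp
    ring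
  have ha_le : s + r ≤ 2 / V := by
    have h1 : 1 / A4 ≤ 1 / V := one_div_le_one_div_of_le hVpos hB4
    have h2 : 1 / A2 ≤ 1 / V := one_div_le_one_div_of_le hVpos hB2
    calc s + r ≤ 1 / A4 + 1 / A2 := add_le_add hs_le hr_le
      _ ≤ 1 / V + 1 / V := add_le_add h1 h2
      _ = 2 / V := by ring
  have hxge : V ≤ x := by rw [hxdef]; linarith
  have hA3sq : V ^ 2 ≤ A3 ^ 2 := pow_le_pow_left₀ hVpos.le hB3 2
  have h4x : V ^ 3 ≤ A3 ^ 2 * x := by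
    calc V ^ 3 = V ^ 2 * V := by ring
      _ ≤ A3 ^ 2 * x := mul_le_mul hA3sq hxge hVpos.le (sq_nonneg A3)
  have hfirst : (s + r) ^ 2 / (A3 ^ 2 * x) ≤ 4 / V ^ 5 := by
    rw [div_le_div_iff₀ (mul_pos (pow_pos hA3pos 2) hxpos) (pow_pos hVpos 5)]
    have h2 : (0:ℝ) ≤ s + r := by linarith
    calc (s + r) ^ 2 * V ^ 5 ≤ (2 / V) ^ 2 * V ^ 5 := by
          apply mul_le_mul_of_nonneg_right (pow_le_pow_left₀ h2 ha_le 2)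
            (pow_nonneg hVpos.le 5)
      _ = 4 * V ^ 3 := by field_simp; ring
      _ ≤ 4 * (A3 ^ 2 * x) := by linarith
  have hsnn : 0 ≤ 1 / A4 - s := by
    rw [hsdef, sub_nonneg]
    exact one_div_le_one_div_of_le hA4pos hC3ge
  have hrnn : 0 ≤ 1 / A2 - r := by
    rw [hrdef, sub_nonneg, div_le_div_iff₀ hQ2pos hA2pos]
    have h : Q1 * A2 = A2 * Q1 := mul_comm _ _
    linarith
  have hsecond : ((1 / A2 - r) + (1 / A4 - s)) / A3 ^ 2 ≤ 2 / V ^ 5 := by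
    rw [div_le_div_iff₀ (pow_pos hA3pos 2) (pow_pos hVpos 5)]
    have h1 : (1 / A2 - r) + (1 / A4 - s) ≤ 2 / V ^ 3 := by
      calc (1 / A2 - r) + (1 / A4 - s) ≤ 1 / V ^ 3 + 1 / V ^ 3 := add_le_add hr_lb hs_lb
        _ = 2 / V ^ 3 := by ring
    calc ((1 / A2 - r) + (1 / A4 - s)) * V ^ 5 ≤ (2 / V ^ 3) * V ^ 5 := by
          apply mul_le_mul_of_nonneg_right h1 (pow_nonneg hVpos.le 5)
      _ = 2 * V ^ 2 := by field_simp
      _ ≤ 2 * A3 ^ 2 := by linarith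
  have hfirst0 : 0 ≤ (s + r) ^ 2 / (A3 ^ 2 * x) :=
    div_nonneg (sq_nonneg _) (le_of_lt (mul_pos (pow_pos hA3pos 2) hxpos))
  have hsecond0 : 0 ≤ ((1 / A2 - r) + (1 / A4 - s)) / A3 ^ 2 := by
    have h3 : (0:ℝ) < A3 ^ 2 := by positivity
    exact div_nonneg (add_nonneg hrnn hsnn) (by linarith)
  have hmain : 0 ≤ 1 / x - T ∧ 1 / x - T ≤ 6 / V ^ 5 := by
    constructor
    · rw [hTid]; exact add_nonneg hfirst0 hsecond0
    · rw [hTid]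
      calc (s + r) ^ 2 / (A3 ^ 2 * x) + ((1 / A2 - r) + (1 / A4 - s)) / A3 ^ 2
          ≤ 4 / V ^ 5 + 2 / V ^ 5 := add_le_add hfirst hsecond
        _ = 6 / V ^ 5 := by ring
  -- evaluate the left-hand side exactly
  set δ : ℝ := Real.sqrt D * Q2 - (p i : ℝ) with hδdef
  clear_value δ
  have hKi := K i (by omega)
  rw [← hC2def, ← hQ2def, ← hQ1def] at hKi
  have hδM : δ * M = (p (i - 1) : ℝ) * Q2 - (p i : ℝ) * Q1 := by
    rw [hδdef, hMdef]
    linear_combination Q2 * hKi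
  have hdet : ((p i : ℝ) * Q1 - (p (i - 1) : ℝ) * Q2) ^ 2 = 1 := by
    rw [hQ1def, hQ2def]
    exact_mod_cast det i (by omega)
  have hδM2 : (δ * M) ^ 2 = 1 := by rw [hδM]; linear_combination hdet
  have hδabs : |δ| = 1 / M := by
    have h1 : (δ * M - 1) * (δ * M + 1) = 0 := by linear_combination hδM2
    have hMne : M ≠ 0 := ne_of_gt hMpos
    rcases mul_eq_zero.mp h1 with h | h
    · have hδeq : δ = 1 / M := by
        rw [eq_div_iff hMne]; linarith
      rw [hδeq, abs_of_pos (div_pos one_pos hMpos)]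
    · have hδeq : δ = -(1 / M) := by
        rw [neg_div', eq_div_iff hMne]; linarith
      rw [hδeq, abs_neg, abs_of_pos (div_pos one_pos hMpos)]
  have hδsmall : |δ| ≤ 1 := by
    rw [hδabs]
    rw [div_le_one hMpos]
    have := mul_pos hC2pos hQ2pos
    linarith [hMdef]
  have hδlt : δ < 2 * Real.sqrt D * Q2 := by
    have h1 : δ ≤ 1 := le_trans (le_abs_self δ) hδsmall
    have h2 : (1:ℝ) * 1 ≤ Real.sqrt D * Q2 :=
      mul_le_mul hsqrtD1 hQ2ge (by norm_num) (by linarith)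
    have e : 2 * Real.sqrt D * Q2 = 2 * (Real.sqrt D * Q2) := by ring
    linarith
  have hNval : |(p i : ℝ) ^ 2 - (D : ℝ) * Q2 ^ 2| = (1 / M) * (2 * Real.sqrt D * Q2 - δ) := by
    have h1 : (p i : ℝ) ^ 2 - (D : ℝ) * Q2 ^ 2 = (-δ) * (2 * Real.sqrt D * Q2 - δ) := by
      rw [hδdef]
      linear_combination (Q2 ^ 2) * hsq
    rw [h1, abs_mul, abs_neg, hδabs, abs_of_pos (by linarith)]
  have hLHS : |(p i : ℝ) ^ 2 - (D : ℝ) * Q2 ^ 2| / (2 * Real.sqrt D)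
      = 1 / x - δ / (2 * Real.sqrt D * M) := by
    have hx0 : x ≠ 0 := ne_of_gt hxpos
    have hq20 : Q2 ≠ 0 := ne_of_gt hQ2pos
    have hsd0 : Real.sqrt D ≠ 0 := ne_of_gt hsqrtD_pos
    rw [hNval, hxM]
    field_simp
  have hηabs : |δ / (2 * Real.sqrt D * M)| ≤ 1 / V ^ 5 := by
    have hMne : M ≠ 0 := ne_of_gt hMpos
    have h2M : (0:ℝ) < 2 * Real.sqrt D * M := mul_pos (by positivity) hMpos
    rw [abs_div, abs_of_pos h2M]
    rw [div_le_div_iff₀ h2M (pow_pos hVpos 5)]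
    calc |δ| * V ^ 5 ≤ (1 / M) * (2 * Real.sqrt D * M ^ 2) := by
          rw [hδabs]
          apply mul_le_mul_of_nonneg_left hM5 (le_of_lt (div_pos one_pos hMpos))
      _ = 2 * Real.sqrt D * M := by field_simp
      _ ≤ 1 * (2 * Real.sqrt D * M) := by linarith
  -- put it together
  set L : ℝ := |(p i : ℝ) ^ 2 - (D : ℝ) * Q2 ^ 2| / (2 * Real.sqrt D) with hLdef
  clear_value L
  have hdiff : |L - T| ≤ 7 / V ^ 5 := by
    rw [hLHS]
    have h1 := hmain.1
    have h2 := hmain.2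
    have h3 := abs_le.mp hηabs
    rw [abs_le]
    have h4 : (0:ℝ) < 1 / V ^ 5 := one_div_pos.mpr (pow_pos hVpos 5)
    have e6 : (6:ℝ) / V ^ 5 = 6 * (1 / V ^ 5) := by ring
    have e7 : (7:ℝ) / V ^ 5 = 7 * (1 / V ^ 5) := by ring
    constructor
    · linarith [h1, h3.2, h4]
    · linarith [h2, h3.1, h4]
  refine ⟨(L - T) * V ^ 5 / 10, ?_, ?_⟩
  · rw [abs_div, abs_mul, abs_of_pos (pow_pos hVpos 5)]
    rw [abs_of_pos (by norm_num : (0:ℝ) < 10), div_le_one (by norm_num)]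
    have h1 : |L - T| * V ^ 5 ≤ (7 / V ^ 5) * V ^ 5 :=
      mul_le_mul_of_nonneg_right hdiff (pow_nonneg hVpos.le 5)
    have h2 : (7 / V ^ 5) * V ^ 5 = 7 := by field_simp
    linarith
  · field_simp
    ring
end

section
/- For odd i and 0 ≤ r ≤ u_{i+2}, the semiconvergent α_{i,r} = α_i + r α_{i+1} is totally positive and its norm equals N(α_{i,r}) = (D − (T_{i+1} + r N(α_{i+1}))²) / |N(α_{i+1})|. -/
set_option maxHeartbeats 1000000


open Real

theorem stmt10 (D : ℕ) (hDsf : Squarefree D) (hD4 : D % 4 = 2 ∨ D % 4 = 3)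
    (u : ℤ → ℤ) (c : ℤ → ℝ)
    (hc0 : c 0 = Real.sqrt D)
    (hu : ∀ i : ℤ, 0 ≤ i → u i = ⌊c i⌋)
    (hcrec : ∀ i : ℤ, 0 ≤ i → c (i + 1) = 1 / (c i - u i))
    (p q : ℤ → ℤ)
    (hpm : p (-1) = 1) (hqm : q (-1) = 0)
    (hp0 : p 0 = u 0) (hq0 : q 0 = 1)
    (hprec : ∀ i : ℤ, 0 ≤ i → p (i + 1) = u (i + 1) * p i + p (i - 1))
    (hqrec : ∀ i : ℤ, 0 ≤ i → q (i + 1) = u (i + 1) * q i + q (i - 1)) :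
    ∀ i : ℤ, Odd i → -1 ≤ i → ∀ r : ℤ, 0 ≤ r → r ≤ u (i + 2) →
      (0 < ((p i : ℝ) + r * (p (i + 1) : ℝ)) + ((q i : ℝ) + r * (q (i + 1) : ℝ)) * Real.sqrt D ∧
       0 < ((p i : ℝ) + r * (p (i + 1) : ℝ)) - ((q i : ℝ) + r * (q (i + 1) : ℝ)) * Real.sqrt D) ∧
      (((p i : ℝ) + (r : ℝ) * (p (i + 1) : ℝ)) ^ 2 - (D : ℝ) * ((q i : ℝ) + (r : ℝ) * (q (i + 1) : ℝ)) ^ 2)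
        = ((D : ℝ) - (((p (i + 1) * p i - (D : ℤ) * (q (i + 1) * q i) : ℤ) : ℝ) + (r : ℝ) * ((p (i + 1) : ℝ) ^ 2 - (D : ℝ) * (q (i + 1) : ℝ) ^ 2)) ^ 2) / |((p (i + 1) : ℝ) ^ 2 - (D : ℝ) * (q (i + 1) : ℝ) ^ 2)| := by
  have hD2 : 2 ≤ D := by rcases hD4 with h | h <;> omega
  have hDnotsq : ¬ IsSquare D := by
    rintro ⟨k, hk⟩
    have hk1 : IsUnit k := hDsf k (by rw [hk])
    rw [Nat.isUnit_iff] at hk1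
    rw [hk1] at hk
    omega
  have hirr : Irrational (Real.sqrt D) := irrational_sqrt_natCast_iff.mpr hDnotsq
  have hsqrtpos : (0:ℝ) < Real.sqrt D := Real.sqrt_pos.mpr (by positivity)
  have hsd : (1:ℝ) < Real.sqrt D := by
    have : (1:ℝ) < (D:ℝ) := by exact_mod_cast hD2.trans_lt' (by norm_num)
    nlinarith [Real.sq_sqrt (show (0:ℝ) ≤ D by positivity), Real.sqrt_nonneg (D:ℝ)]
  have hsq : Real.sqrt D ^ 2 = (D:ℝ) := Real.sq_sqrt (by positivity)
  -- basic facts about the complete quotients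
  have good : ∀ n : ℕ, Irrational (c n) ∧ 1 < c n := by
    intro n
    induction n with
    | zero => exact ⟨by simpa [hc0] using hirr, by simpa [hc0] using hsd⟩
    | succ k ih =>
      have hk : (0:ℤ) ≤ (k:ℤ) := Int.natCast_nonneg k
      have hrec := hcrec k hk
      have huk := hu k hk
      have hlt : (u k : ℝ) < c k := by
        rw [huk]
        exact lt_of_le_of_ne (Int.floor_le (c k)) (Ne.symm (ih.1.ne_int ⌊c k⌋))
      have hlt1 : c k - u k < 1 := by
        rw [huk]
        have := Int.sub_one_lt_floor (c k)
        linarith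
      have hpos : 0 < c k - u k := by linarith
      have hidx : ((k:ℤ) + 1) = ((k+1 : ℕ) : ℤ) := by push_cast; ring
      rw [← hidx]
      constructor
      · rw [hrec, one_div]
        exact (ih.1.sub_intCast (u k)).inv
      · rw [hrec]
        exact one_lt_one_div hpos hlt1
  have hfrac : ∀ n : ℕ, 0 < c n - u n ∧ c n - u n < 1 := by
    intro n
    have hk : (0:ℤ) ≤ (n:ℤ) := Int.natCast_nonneg n
    have huk := hu n hk
    have h1 := (good n).1
    constructor
    · rw [huk]
      have := Int.floor_le (c n)
      have hne := (h1.ne_int ⌊c n⌋).symm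
      cases lt_or_eq_of_le this with
      | inl h => linarith
      | inr h => exact absurd h hne
    · rw [huk]
      have := Int.sub_one_lt_floor (c n)
      linarith
  have hu1 : ∀ n : ℕ, 1 ≤ u n := by
    intro n
    rw [hu n (Int.natCast_nonneg n)]
    exact Int.le_floor.mpr (by exact_mod_cast (good n).2.le)
  -- positivity of p, q
  have hq' : ∀ n : ℕ, 0 ≤ q ((n:ℤ) - 1) ∧ 1 ≤ q (n:ℤ) := by
    intro n
    induction n with
    | zero => norm_num [hqm, hq0]
    | succ k ih =>
      have hrec := hqrec k (Int.natCast_nonneg k)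
      have hu2 := hu1 (k+1)
      have hidx : ((k+1:ℕ):ℤ) = (k:ℤ) + 1 := by push_cast; ring
      rw [hidx]
      constructor
      · simpa using ih.2.trans_lt' (by norm_num) |>.le
      · rw [hrec]
        rw [show ((k:ℤ)+1) = ((k+1:ℕ):ℤ) by push_cast; ring] at *
        nlinarith [ih.1, ih.2, hu2]
  have hp' : ∀ n : ℕ, 1 ≤ p ((n:ℤ) - 1) ∧ 1 ≤ p (n:ℤ) := by
    intro n
    induction n with
    | zero =>
      refine ⟨by norm_num [hpm], ?_⟩
      have := hu1 0
      simp only [Nat.cast_zero, hp0]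
      exact_mod_cast this
    | succ k ih =>
      have hrec := hprec k (Int.natCast_nonneg k)
      have hu2 := hu1 (k+1)
      have hidx : ((k+1:ℕ):ℤ) = (k:ℤ) + 1 := by push_cast; ring
      rw [hidx]
      refine ⟨by simpa using ih.2, ?_⟩
      rw [hrec]
      rw [show ((k:ℤ)+1) = ((k+1:ℕ):ℤ) by push_cast; ring] at *
      nlinarith [ih.1, ih.2, hu2]
  -- determinant identity
  have hdet : ∀ n : ℕ, p (n:ℤ) * q ((n:ℤ) - 1) - p ((n:ℤ) - 1) * q (n:ℤ) = (-1)^(n+1) := by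
    intro n
    induction n with
    | zero => norm_num [hpm, hqm, hp0, hq0]
    | succ k ih =>
      have hrp := hprec k (Int.natCast_nonneg k)
      have hrq := hqrec k (Int.natCast_nonneg k)
      have hidx : ((k+1:ℕ):ℤ) = (k:ℤ) + 1 := by push_cast; ring
      rw [hidx, show (k:ℤ) + 1 - 1 = (k:ℤ) by ring, hrp, hrq, pow_succ]
      linear_combination (-1 : ℤ) * ih
  -- key identity relating convergents and complete quotients
  have hA : ∀ n : ℕ, ((q (n:ℤ) : ℝ) * Real.sqrt D - (p (n:ℤ) : ℝ)) * c ((n:ℤ) + 1)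
      = (p ((n:ℤ) - 1) : ℝ) - (q ((n:ℤ) - 1) : ℝ) * Real.sqrt D := by
    intro n
    induction n with
    | zero =>
      have hr := hcrec 0 le_rfl
      have hne : c 0 - (u 0 : ℝ) ≠ 0 := (hfrac 0).1.ne'
      rw [hc0] at hne hr
      simp only [Nat.cast_zero, zero_sub, hpm, hqm, hq0, hp0, hr]
      push_cast
      rw [mul_one_div, div_eq_iff hne]
      ring
    | succ k ih =>
      have hk1 : (0:ℤ) ≤ (k:ℤ) + 1 := by positivity
      have hr := hcrec ((k:ℤ)+1) hk1
      have hfr := hfrac (k+1)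
      have hidx : ((k+1:ℕ):ℤ) = (k:ℤ) + 1 := by push_cast; ring
      rw [hidx] at hfr ⊢
      have hne : c ((k:ℤ)+1) - (u ((k:ℤ)+1) : ℝ) ≠ 0 := hfr.1.ne'
      have hrp := hprec k (Int.natCast_nonneg k)
      have hrq := hqrec k (Int.natCast_nonneg k)
      rw [show (k:ℤ) + 1 - 1 = (k:ℤ) by ring, show (k:ℤ) + 1 + 1 = ((k:ℤ)+1) + 1 by ring,
        hr, hrp, hrq]
      push_cast
      rw [mul_one_div, div_eq_iff hne]
      linear_combination ih
  have hcpos : ∀ n : ℕ, 0 < c ((n:ℤ) + 1) := by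
    intro n
    have := (good (n+1)).2
    rw [show ((n+1:ℕ):ℤ) = (n:ℤ) + 1 by push_cast; ring] at this
    linarith
  -- sign of the conjugates
  have hB : ∀ n : ℕ, 0 < (-1:ℝ)^n * ((p ((n:ℤ) - 1) : ℝ) - (q ((n:ℤ) - 1) : ℝ) * Real.sqrt D) := by
    intro n
    induction n with
    | zero => norm_num [hpm, hqm]
    | succ k ih =>
      have hAk := hA k
      have hcp := hcpos k
      have key : 0 < (-1:ℝ)^k * ((q (k:ℤ) : ℝ) * Real.sqrt D - (p (k:ℤ) : ℝ)) := by
        by_contra h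
        push_neg at h
        have h2 : (-1:ℝ)^k * (((q (k:ℤ) : ℝ) * Real.sqrt D - (p (k:ℤ) : ℝ)) * c ((k:ℤ) + 1)) ≤ 0 := by
          rcases h.lt_or_eq with h | h
          · nlinarith
          · nlinarith
        rw [hAk] at h2
        linarith
      have hidx : ((k+1:ℕ):ℤ) - 1 = (k:ℤ) := by push_cast; ring
      rw [hidx, pow_succ]
      nlinarith [key]
  -- main assembly
  intro i hiodd hi r hr0 hru
  obtain ⟨m, hm⟩ : ∃ m : ℕ, (m:ℤ) = i + 1 := ⟨(i+1).toNat, Int.toNat_of_nonneg (by omega)⟩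
  have hmeven : Even m := by
    have : Even ((m:ℤ)) := by rw [hm]; exact hiodd.add_one
    exact_mod_cast this
  have hi' : i = (m:ℤ) - 1 := by omega
  subst hi'
  have e1 : (m:ℤ) - 1 + 1 = (m:ℤ) := by ring
  have e2 : (m:ℤ) - 1 + 2 = (m:ℤ) + 1 := by ring
  rw [e2] at hru
  rw [e1]
  -- facts
  have hpm1 : (1:ℤ) ≤ p ((m:ℤ) - 1) := (hp' m).1
  have hpm0 : (1:ℤ) ≤ p (m:ℤ) := (hp' m).2
  have hqm1 : (0:ℤ) ≤ q ((m:ℤ) - 1) := (hq' m).1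
  have hqm0 : (1:ℤ) ≤ q (m:ℤ) := (hq' m).2
  have hpow : (-1:ℝ)^m = 1 := hmeven.neg_one_pow
  have hBm : 0 < (p ((m:ℤ) - 1) : ℝ) - (q ((m:ℤ) - 1) : ℝ) * Real.sqrt D := by
    have := hB m; rw [hpow] at this; linarith
  have hBm1 : (p (m:ℤ) : ℝ) - (q (m:ℤ) : ℝ) * Real.sqrt D < 0 := by
    have := hB (m+1)
    rw [show ((m+1:ℕ):ℤ) - 1 = (m:ℤ) by push_cast; ring, pow_succ, hpow] at this
    linarith
  have hBm2 : 0 < (p ((m:ℤ) + 1) : ℝ) - (q ((m:ℤ) + 1) : ℝ) * Real.sqrt D := by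
    have := hB (m+2)
    rw [show ((m+2:ℕ):ℤ) - 1 = (m:ℤ) + 1 by push_cast; ring, pow_add, hpow] at this
    norm_num at this
    linarith
  have hrp := hprec m (Int.natCast_nonneg m)
  have hrq := hqrec m (Int.natCast_nonneg m)
  have hrR : (r:ℝ) ≤ (u ((m:ℤ) + 1) : ℝ) := by exact_mod_cast hru
  have hr0R : (0:ℝ) ≤ (r:ℝ) := by exact_mod_cast hr0
  have hN1neg : (p (m:ℤ) : ℝ) ^ 2 - (D:ℝ) * (q (m:ℤ) : ℝ) ^ 2 < 0 := by
    have hpos : 0 < (p (m:ℤ) : ℝ) + (q (m:ℤ) : ℝ) * Real.sqrt D := by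
      have h1 : (1:ℝ) ≤ (p (m:ℤ) : ℝ) := by exact_mod_cast hpm0
      have h2 : (1:ℝ) ≤ (q (m:ℤ) : ℝ) := by exact_mod_cast hqm0
      nlinarith
    nlinarith [mul_neg_of_pos_of_neg hpos hBm1]
  constructor
  · constructor
    · -- positivity of the element
      have h1 : (1:ℝ) ≤ (p ((m:ℤ) - 1) : ℝ) := by exact_mod_cast hpm1
      have h2 : (0:ℝ) ≤ (q ((m:ℤ) - 1) : ℝ) := by exact_mod_cast hqm1
      have h3 : (1:ℝ) ≤ (p (m:ℤ) : ℝ) := by exact_mod_cast hpm0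
      have h4 : (1:ℝ) ≤ (q (m:ℤ) : ℝ) := by exact_mod_cast hqm0
      nlinarith
    · -- positivity of the conjugate
      have hrpR := congrArg (fun z : ℤ => (z:ℝ)) hrp
      have hrqR := congrArg (fun z : ℤ => (z:ℝ)) hrq
      push_cast at hrpR hrqR
      have hz : (p ((m:ℤ)+1) : ℝ) - (q ((m:ℤ)+1) : ℝ) * Real.sqrt D
          = (u ((m:ℤ)+1) : ℝ) * ((p (m:ℤ) : ℝ) - (q (m:ℤ) : ℝ) * Real.sqrt D)
            + ((p ((m:ℤ)-1) : ℝ) - (q ((m:ℤ)-1) : ℝ) * Real.sqrt D) := by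
        rw [hrpR, hrqR]; ring
      have hprod : (0:ℝ) ≤ ((u ((m:ℤ)+1) : ℝ) - (r:ℝ)) * (-((p (m:ℤ) : ℝ) - (q (m:ℤ) : ℝ) * Real.sqrt D)) :=
        mul_nonneg (by linarith) (by linarith)
      nlinarith [hz, hprod, hBm2]
  · -- norm formula
    have hdetm := hdet m
    have hdetR : ((p (m:ℤ) : ℝ) * (q ((m:ℤ)-1) : ℝ) - (p ((m:ℤ)-1) : ℝ) * (q (m:ℤ) : ℝ)) ^ 2 = 1 := by
      have h2 := congrArg (fun z : ℤ => (z:ℝ)) hdetm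
      push_cast at h2
      rw [h2, ← pow_mul, pow_mul']
      norm_num
    rw [abs_of_neg hN1neg, eq_div_iff (by linarith : -((p (m:ℤ) : ℝ) ^ 2 - (D:ℝ) * (q (m:ℤ) : ℝ) ^ 2) ≠ 0)]
    push_cast
    linear_combination (D:ℝ) * hdetR
end

section
/- Every totally positive indecomposable element α of ℤ[√D] satisfies N(α) ≤ D/N, where N is the minimum of |N(β)| over all β ∈ ℤ[√D] of negative norm. -/
open Real

set_option maxHeartbeats 1000000 in
theorem stmt11 (D : ℕ) (hDsf : Squarefree D) (hD4 : D % 4 = 2 ∨ D % 4 = 3)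
    (N : ℕ)
    (hN : IsLeast {n : ℕ | 0 < n ∧ ∃ a b : ℤ, a ^ 2 - (D : ℤ) * b ^ 2 = -(n : ℤ)} N)
    (x y : ℤ)
    (hpos : 0 < (x : ℝ) + y * Real.sqrt D ∧ 0 < (x : ℝ) - y * Real.sqrt D)
    (hindec : ¬ ∃ a b a' b' : ℤ,
      (0 < (a : ℝ) + b * Real.sqrt D ∧ 0 < (a : ℝ) - b * Real.sqrt D) ∧
      (0 < (a' : ℝ) + b' * Real.sqrt D ∧ 0 < (a' : ℝ) - b' * Real.sqrt D) ∧
      x = a + a' ∧ y = b + b') :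
    (x : ℝ) ^ 2 - (D : ℝ) * (y : ℝ) ^ 2 ≤ (D : ℝ) / (N : ℝ) := by
  obtain ⟨hpos1, hpos2⟩ := hpos
  set s := Real.sqrt D with hs
  have hD2 : 2 ≤ D := by rcases hD4 with h | h <;> omega
  have hs2 : s ^ 2 = D := Real.sq_sqrt (by positivity)
  have hs0 : 0 < s := Real.sqrt_pos.mpr (by positivity)
  have hnsq : ¬ IsSquare D := by
    rintro ⟨k, hk⟩
    have hu : IsUnit k := hDsf k (by rw [hk])
    rw [Nat.isUnit_iff] at hu
    rw [hu, mul_one] at hk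
    omega
  have hirr : Irrational s := irrational_sqrt_natCast_iff.mpr hnsq
  -- key: nontrivial integer combinations of 1, s are nonzero
  have hzero : ∀ p q : ℤ, (p : ℝ) + q * s = 0 → p = 0 ∧ q = 0 := by
    intro p q h
    by_cases hq : q = 0
    · subst hq
      refine ⟨?_, rfl⟩
      have : (p : ℝ) = 0 := by simpa using h
      exact_mod_cast this
    · exfalso
      apply hirr
      refine ⟨(-p : ℚ) / q, ?_⟩
      have hq' : (q : ℝ) ≠ 0 := Int.cast_ne_zero.mpr hq
      push_cast
      rw [div_eq_iff hq']
      linarith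
  -- x and y are coprime
  have hcop : IsCoprime x y := by
    rw [Int.isCoprime_iff_gcd_eq_one]
    by_contra hg1
    have hg0 : Int.gcd x y ≠ 0 := by
      intro h0
      rw [Int.gcd_eq_zero_iff] at h0
      obtain ⟨rfl, rfl⟩ := h0
      simp at hpos1
    set g : ℤ := (Int.gcd x y : ℤ) with hgdef
    have hg2 : 2 ≤ g := by
      have h1 : 1 ≤ Int.gcd x y := Nat.one_le_iff_ne_zero.mpr hg0
      have h2 : Int.gcd x y ≠ 1 := hg1
      rw [hgdef]
      omega
    obtain ⟨a, ha⟩ : g ∣ x := Int.gcd_dvd_left x y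
    obtain ⟨b, hb⟩ : g ∣ y := Int.gcd_dvd_right x y
    have hgR : (2 : ℝ) ≤ (g : ℝ) := by exact_mod_cast hg2
    have hx' : (x : ℝ) = g * a := by exact_mod_cast congrArg (Int.cast : ℤ → ℝ) ha
    have hy' : (y : ℝ) = g * b := by exact_mod_cast congrArg (Int.cast : ℤ → ℝ) hb
    have hA : (0 : ℝ) < (a : ℝ) + b * s := by
      have h1 : (0 : ℝ) < (g : ℝ) * ((a : ℝ) + b * s) := by
        rw [hx', hy'] at hpos1
        nlinarith [hpos1]
      nlinarith [h1, hgR]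
    have hA' : (0 : ℝ) < (a : ℝ) - b * s := by
      have h1 : (0 : ℝ) < (g : ℝ) * ((a : ℝ) - b * s) := by
        rw [hx', hy'] at hpos2
        nlinarith [hpos2]
      nlinarith [h1, hgR]
    apply hindec
    refine ⟨a, b, x - a, y - b, ⟨hA, hA'⟩, ⟨?_, ?_⟩, by ring, by ring⟩
    · push_cast
      rw [hx', hy']
      nlinarith [hA, hgR]
    · push_cast
      rw [hx', hy']
      nlinarith [hA', hgR]
  -- Bezout
  obtain ⟨a0, b0, hab⟩ := hcop
  have hbez0 : x * a0 - y * (-b0) = 1 := by linear_combination hab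
  -- choose the minimal positive representative on the line
  set A : ℝ := (x : ℝ) + y * s with hA
  set A' : ℝ := (x : ℝ) - y * s with hA'
  set w : ℝ := (-(((-b0 : ℤ) : ℝ) + a0 * s)) / A with hw
  set t : ℤ := ⌊w⌋ + 1 with ht
  set u : ℤ := -b0 + t * x with hudef
  set v : ℤ := a0 + t * y with hvdef
  have hbez : x * v - y * u = 1 := by rw [hudef, hvdef]; linear_combination hbez0
  have hbezR : (x : ℝ) * v - y * u = 1 := by exact_mod_cast hbez
  set δ : ℝ := (u : ℝ) + v * s with hδ
  set δ' : ℝ := (u : ℝ) - v * s with hδ'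
  have hwA : w * A = -(((-b0 : ℤ) : ℝ) + a0 * s) := by
    rw [hw]; field_simp
  have hδeq : δ = (((-b0 : ℤ) : ℝ) + a0 * s) + t * A := by
    rw [hδ, hudef, hvdef, hA]; push_cast; ring
  have hδpos : 0 < δ := by
    have hlt : w < ((t : ℤ) : ℝ) := by rw [ht]; exact_mod_cast Int.lt_floor_add_one w
    have hlt' : w * A < ((t : ℤ) : ℝ) * A := mul_lt_mul_of_pos_right hlt hpos1
    rw [hwA] at hlt'
    rw [hδeq]; linarith
  have hδprev : δ - A ≤ 0 := by
    have hle : ((⌊w⌋ : ℤ) : ℝ) ≤ w := Int.floor_le w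
    have hle' : ((⌊w⌋ : ℤ) : ℝ) * A ≤ w * A :=
      mul_le_mul_of_nonneg_right hle (le_of_lt hpos1)
    rw [hwA] at hle'
    have htR : ((t : ℤ) : ℝ) = ((⌊w⌋ : ℤ) : ℝ) + 1 := by rw [ht]; push_cast; ring
    rw [hδeq, htR]; linarith
  -- line identity
  have hline : δ * A' - δ' * A = 2 * s := by
    rw [hδ, hδ', hA, hA']
    linear_combination 2 * s * hbezR
  have hnormδ : δ * δ' = (u : ℝ) ^ 2 - D * v ^ 2 := by
    rw [hδ, hδ']
    linear_combination (-(v : ℝ) ^ 2) * hs2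
  rcases lt_trichotomy δ' 0 with hneg | hzeroδ | hposδ
  · -- δ has negative norm: conclude the bound
    have hnegZ : (u ^ 2 - (D : ℤ) * v ^ 2 : ℤ) < 0 := by
      have hr : (u : ℝ) ^ 2 - D * v ^ 2 < 0 := by
        rw [← hnormδ]; exact mul_neg_of_pos_of_neg hδpos hneg
      exact_mod_cast hr
    have hNn : (N : ℤ) ≤ (D : ℤ) * v ^ 2 - u ^ 2 := by
      have hmem : ((D : ℤ) * v ^ 2 - u ^ 2).toNat ∈
          {m : ℕ | 0 < m ∧ ∃ a b : ℤ, a ^ 2 - (D : ℤ) * b ^ 2 = -(m : ℤ)} := by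
        refine ⟨by omega, u, v, ?_⟩
        rw [Int.toNat_of_nonneg (by omega)]
        ring
      have := hN.2 hmem
      omega
    have hmpos : 0 < x ^ 2 - (D : ℤ) * y ^ 2 := by
      have hr : (0 : ℝ) < (x : ℝ) ^ 2 - D * y ^ 2 := by
        have hAA : (x : ℝ) ^ 2 - D * y ^ 2 = A * A' := by
          rw [hA, hA']; linear_combination ((y : ℝ) ^ 2) * hs2
        rw [hAA]; exact mul_pos hpos1 hpos2
      exact_mod_cast hr
    have hmn : (x ^ 2 - (D : ℤ) * y ^ 2) * ((D : ℤ) * v ^ 2 - u ^ 2) ≤ (D : ℤ) := by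
      have hkey : (x ^ 2 - (D : ℤ) * y ^ 2) * ((D : ℤ) * v ^ 2 - u ^ 2)
          + (u * x - (D : ℤ) * v * y) ^ 2 = (D : ℤ) * (x * v - y * u) ^ 2 := by ring
      rw [hbez] at hkey
      nlinarith [sq_nonneg (u * x - (D : ℤ) * v * y)]
    have hN0 : 0 < N := hN.1.1
    have hfin : (x ^ 2 - (D : ℤ) * y ^ 2) * (N : ℤ) ≤ (D : ℤ) := by nlinarith
    have hNR : (0 : ℝ) < (N : ℝ) := by exact_mod_cast hN0
    rw [le_div_iff₀ hNR]
    have hfinR : ((x : ℝ) ^ 2 - (D : ℝ) * (y : ℝ) ^ 2) * (N : ℝ) ≤ (D : ℝ) := by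
      exact_mod_cast hfin
    exact hfinR
  · -- δ' = 0 impossible
    exfalso
    have h0 : (u : ℝ) + ((-v : ℤ) : ℝ) * s = 0 := by
      push_cast
      rw [hδ'] at hzeroδ
      linarith
    obtain ⟨hu0, hv0⟩ := hzero u (-v) h0
    have hv0' : v = 0 := by omega
    rw [hu0, hv0'] at hbez
    simp at hbez
  · -- δ totally positive : α decomposes, contradiction
    exfalso
    rcases eq_or_lt_of_le hδprev with heq | hlt
    · -- δ = A : then u = x, v = y, contradicting Bezout
      have h0 : ((u - x : ℤ) : ℝ) + ((v - y : ℤ) : ℝ) * s = 0 := by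
        rw [hδ, hA] at heq
        push_cast
        linarith
      obtain ⟨h1, h2⟩ := hzero (u - x) (v - y) h0
      have hux : u = x := by omega
      have hvy : v = y := by omega
      rw [hux, hvy] at hbez
      have : x * y - y * x = 0 := by ring
      omega
    · -- genuine decomposition α = (α - δ) + δ
      have hφ : 0 < A - δ := by linarith
      have h1 : A * (A' - δ') = A' * (A - δ) + 2 * s := by linear_combination hline
      have hφ' : 0 < A' - δ' := by
        nlinarith [h1, hpos1, hpos2, hφ, hs0, mul_pos hpos2 hφ]
      apply hindec
      refine ⟨x - u, y - v, u, v, ⟨?_, ?_⟩, ⟨?_, ?_⟩, by ring, by ring⟩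
      · rw [hA, hδ] at hφ
        push_cast
        linarith
      · rw [hA', hδ'] at hφ'
        push_cast
        linarith
      · rw [hδ] at hδpos; exact hδpos
      · rw [hδ'] at hposδ; exact hposδ
end

section
/- For i odd, the inequality |T_{i+1}/N_{i+1} − u_{i+2}/2| < 1/2 holds; equivalently, N_{i+1} > |−2√D + N_{i+1}(c_{i+2} + 1/c_{i+3})|. -/
open Real

set_option maxHeartbeats 2000000 in
theorem stmt14 (D : ℕ) (hDsf : Squarefree D) (hD4 : D % 4 = 2 ∨ D % 4 = 3)
    (u : ℤ → ℤ) (c : ℤ → ℝ)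
    (hc0 : c 0 = Real.sqrt D)
    (hu : ∀ i : ℤ, 0 ≤ i → u i = ⌊c i⌋)
    (hcrec : ∀ i : ℤ, 0 ≤ i → c (i + 1) = 1 / (c i - u i))
    (p q : ℤ → ℤ)
    (hpm : p (-1) = 1) (hqm : q (-1) = 0)
    (hp0 : p 0 = u 0) (hq0 : q 0 = 1)
    (hprec : ∀ i : ℤ, 0 ≤ i → p (i + 1) = u (i + 1) * p i + p (i - 1))
    (hqrec : ∀ i : ℤ, 0 ≤ i → q (i + 1) = u (i + 1) * q i + q (i - 1)) :
    ∀ i : ℤ, Odd i → -1 ≤ i →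
      |((p (i + 1) * p i - (D : ℤ) * (q (i + 1) * q i) : ℤ) : ℝ) / |(p (i + 1) : ℝ) ^ 2 - (D : ℝ) * (q (i + 1) : ℝ) ^ 2| - (u (i + 2) : ℝ) / 2| < 1 / 2 ∧
      |-2 * Real.sqrt D + |(p (i + 1) : ℝ) ^ 2 - (D : ℝ) * (q (i + 1) : ℝ) ^ 2| * (c (i + 2) + 1 / c (i + 3))| < |(p (i + 1) : ℝ) ^ 2 - (D : ℝ) * (q (i + 1) : ℝ) ^ 2| := by
  have hD2 : 2 ≤ D := by rcases hD4 with h | h <;> omega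
  have hDns : ¬ IsSquare (D : ℕ) := by
    rintro ⟨k, hk⟩
    have hk' : IsUnit k := hDsf k (by rw [hk])
    have : k = 1 := Nat.isUnit_iff.mp hk'
    subst this
    rcases hD4 with h | h <;> omega
  set L := Real.sqrt (D : ℝ) with hLdef
  have hirr : Irrational L := irrational_sqrt_natCast_iff.mpr hDns
  have hL2 : L ^ 2 = (D : ℝ) := Real.sq_sqrt (by positivity)
  have hL0 : 0 ≤ L := Real.sqrt_nonneg _
  have hDR : (2 : ℝ) ≤ (D : ℝ) := by exact_mod_cast hD2
  have hL1 : 1 < L := by nlinarith [sq_nonneg (L - 1)]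
  -- c is irrational
  have hcirr : ∀ j : ℤ, 0 ≤ j → Irrational (c j) := by
    refine Int.le_induction ?_ ?_
    · rw [hc0]; exact hirr
    · intro n hn ih
      rw [hcrec n hn, one_div]
      exact (Irrational.sub_intCast ih (u n)).inv
  have hfrac0 : ∀ j : ℤ, 0 ≤ j → 0 < c j - (u j : ℝ) := by
    intro j hj
    have h1 : ((u j : ℤ) : ℝ) ≤ c j := by rw [hu j hj]; exact Int.floor_le _
    have h2 : c j ≠ ((u j : ℤ) : ℝ) := (hcirr j hj).ne_int (u j)
    have := lt_of_le_of_ne h1 (fun h => h2 h.symm)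
    linarith
  have hfrac1 : ∀ j : ℤ, 0 ≤ j → c j - (u j : ℝ) < 1 := by
    intro j hj
    have := Int.lt_floor_add_one (c j)
    rw [hu j hj]
    push_cast
    push_cast at this
    linarith
  have hc1 : ∀ j : ℤ, 0 ≤ j → 1 < c j := by
    intro j hj
    rcases eq_or_lt_of_le hj with h | h
    · rw [← h, hc0]; exact hL1
    · have hj1 : (0:ℤ) ≤ j - 1 := by omega
      have hr := hcrec (j-1) hj1
      rw [show j - 1 + 1 = j by ring] at hr
      have h0 := hfrac0 (j-1) hj1
      have h1 := hfrac1 (j-1) hj1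
      rw [hr, lt_div_iff₀ h0]
      linarith
  have hu1 : ∀ j : ℤ, 0 ≤ j → 1 ≤ u j := by
    intro j hj
    rw [hu j hj]
    exact Int.le_floor.mpr (by push_cast; exact (hc1 j hj).le)
  -- q and p bounds
  have hq : ∀ j : ℤ, 0 ≤ j → 1 ≤ q j ∧ 0 ≤ q (j-1) := by
    refine Int.le_induction ?_ ?_
    · constructor
      · rw [hq0]
      · rw [show (0:ℤ)-1 = -1 by ring, hqm]
    · intro n hn ih
      have hr := hqrec n hn
      have hu' := hu1 (n+1) (by omega)
      refine ⟨?_, by simp only [add_sub_cancel_right]; linarith [ih.1]⟩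
      rw [hr]
      have h1 : 1 * 1 ≤ u (n+1) * q n := mul_le_mul hu' ih.1 (by omega) (by linarith)
      linarith [ih.2]
  have hp : ∀ j : ℤ, 0 ≤ j → 1 ≤ p j ∧ 0 ≤ p (j-1) := by
    refine Int.le_induction ?_ ?_
    · constructor
      · rw [hp0]; exact hu1 0 le_rfl
      · rw [show (0:ℤ)-1 = -1 by ring, hpm]; norm_num
    · intro n hn ih
      have hr := hprec n hn
      have hu' := hu1 (n+1) (by omega)
      refine ⟨?_, by simp only [add_sub_cancel_right]; linarith [ih.1]⟩
      rw [hr]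
      have h1 : 1 * 1 ≤ u (n+1) * p n := mul_le_mul hu' ih.1 (by omega) (by linarith)
      linarith [ih.2]
  -- beta values are nonzero
  have hbne : ∀ j : ℤ, 0 ≤ j → ((p j : ℝ) - (q j : ℝ) * L) ≠ 0 := by
    intro j hj h
    have hq1 : 1 ≤ q j := (hq j hj).1
    have hq0' : ((q j : ℝ)) ≠ 0 := by
      have : (1:ℝ) ≤ (q j : ℝ) := by exact_mod_cast hq1
      linarith
    apply hirr
    refine ⟨(p j : ℚ) / (q j : ℚ), ?_⟩
    push_cast
    rw [div_eq_iff hq0']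
    linarith
  -- the key relation between c and beta
  have hcb : ∀ j : ℤ, -1 ≤ j →
      c (j+2) = -((p j : ℝ) - (q j : ℝ) * L) / ((p (j+1) : ℝ) - (q (j+1) : ℝ) * L) := by
    refine Int.le_induction ?_ ?_
    · -- c 1 = -(p(-1) - q(-1) L)/(p 0 - q 0 L)
      have hb0' := hbne 0 le_rfl
      rw [hp0, hq0] at hb0'
      push_cast at hb0'
      have hne : (u 0 : ℝ) - L ≠ 0 := by intro h; apply hb0'; linarith
      have hne' : L - (u 0 : ℝ) ≠ 0 := by intro h; apply hne; linarith
      have hcr := hcrec 0 le_rfl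
      rw [show (0:ℤ)+1 = 1 by ring, hc0] at hcr
      rw [show (-1:ℤ)+2 = 1 by ring, show (-1:ℤ)+1 = 0 by ring, hcr, hpm, hqm, hp0, hq0]
      push_cast
      field_simp
      ring
    · intro n hn ih
      have hb1 := hbne (n+1) (by omega)
      have hb2 := hbne (n+2) (by omega)
      have hp2 := hprec (n+1) (by omega)
      have hq2 := hqrec (n+1) (by omega)
      rw [show (n:ℤ)+1+1 = n+2 by ring, show (n:ℤ)+1-1 = n by ring] at hp2 hq2
      have hbrec : ((p (n+2):ℝ) - (q (n+2):ℝ)*L)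
          = (u (n+2):ℝ)*((p (n+1):ℝ) - (q (n+1):ℝ)*L) + ((p n:ℝ) - (q n:ℝ) * L) := by
        rw [hp2, hq2]; push_cast; ring
      have hcr := hcrec (n+2) (by omega)
      have hfr := hfrac0 (n+2) (by omega)
      have hden : c (n+2) - (u (n+2):ℝ) ≠ 0 := ne_of_gt hfr
      rw [ih] at hden
      rw [show (n:ℤ)+1+2 = n+2+1 by ring, hcr, ih,
        show (n:ℤ)+1+1 = n+2 by ring]
      have hb2' : (u (n+2):ℝ)*((p (n+1):ℝ) - (q (n+1):ℝ)*L) + ((p n:ℝ) - (q n:ℝ) * L) ≠ 0 := by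
        rw [← hbrec]; exact hb2
      rw [hbrec]
      set x := (p n:ℝ) - (q n:ℝ) * L with hx
      set y := (p (n+1):ℝ) - (q (n+1):ℝ) * L with hy
      set v := (u (n+2):ℝ) with hv
      have h5 : -x/y - v = -(v*y+x)/y := by
        field_simp
        ring
      rw [h5, one_div_div, div_neg, neg_div]
  -- sign alternation
  have hsign : ∀ j : ℤ, -1 ≤ j →
      (Even j → (p j:ℝ) - (q j:ℝ) * L < 0) ∧ (Odd j → 0 < (p j:ℝ) - (q j:ℝ) * L) := by
    refine Int.le_induction ?_ ?_
    · constructor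
      · intro h; exact absurd (Int.even_iff.mp h) (by omega)
      · intro _; rw [hpm, hqm]; push_cast; linarith
    · intro n hn ih
      have hcb' := hcb n hn
      have hc2 : 1 < c (n+2) := hc1 (n+2) (by omega)
      have hb1 := hbne (n+1) (by omega)
      rw [hcb'] at hc2
      have hdivneg : ((p n:ℝ) - (q n:ℝ) * L) / ((p (n+1):ℝ) - (q (n+1):ℝ) * L) < 0 := by
        rw [neg_div] at hc2; linarith
      constructor
      · intro hev
        have hoddn : Odd n := Int.odd_iff.mpr (by have := Int.even_iff.mp hev; omega)
        have hbn : 0 < (p n:ℝ) - (q n:ℝ) * L := ih.2 hoddn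
        rcases lt_or_gt_of_ne hb1 with h | h
        · exact h
        · exact absurd (div_pos hbn h) (by linarith)
      · intro hodd
        have hevn : Even n := Int.even_iff.mpr (by have := Int.odd_iff.mp hodd; omega)
        have hbn : (p n:ℝ) - (q n:ℝ) * L < 0 := ih.1 hevn
        rcases lt_or_gt_of_ne hb1 with h | h
        · exact absurd (div_pos_of_neg_of_neg hbn h) (by linarith)
        · exact h
  -- determinant identity
  have hdet : ∀ j : ℤ, -1 ≤ j →
      p (j+1) * q j - p j * q (j+1) = (if Even j then 1 else -1) := by
    refine Int.le_induction ?_ ?_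
    · rw [show (-1:ℤ)+1 = 0 by ring, hpm, hqm, hq0,
        if_neg (fun h => by have := Int.even_iff.mp h; omega)]
      ring
    · intro n hn ih
      have hp' := hprec (n+1) (by omega)
      have hq' := hqrec (n+1) (by omega)
      rw [show (n:ℤ)+1-1 = n by ring] at hp' hq'
      rw [show (n:ℤ)+1+1 = n+2 by ring] at hp' hq' ⊢
      rw [hp', hq']
      have h2 : (if Even (n+1) then (1:ℤ) else -1) = -(if Even n then 1 else -1) := by
        by_cases he : Even n
        · rw [if_pos he, if_neg (by rw [Int.even_iff] at he ⊢; omega)]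
        · rw [if_neg he, if_pos (by rw [Int.even_iff] at he ⊢; omega)]; ring
      rw [h2, ← ih]
      ring
  -- now the main statement
  intro i hodd hi
  obtain ⟨k, hk⟩ := hodd
  have hi1 : (0:ℤ) ≤ i + 1 := by omega
  have hi2 : (0:ℤ) ≤ i + 2 := by omega
  -- abbreviations
  obtain ⟨A, hA⟩ : ∃ A : ℝ, A = (p (i+1):ℝ) + (q (i+1):ℝ) * L := ⟨_, rfl⟩
  obtain ⟨a, ha⟩ : ∃ a : ℝ, a = (p (i+1):ℝ) - (q (i+1):ℝ) * L := ⟨_, rfl⟩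
  obtain ⟨b0, hb0⟩ : ∃ b : ℝ, b = (p i:ℝ) - (q i:ℝ) * L := ⟨_, rfl⟩
  obtain ⟨b2, hb2⟩ : ∃ b : ℝ, b = (p (i+2):ℝ) - (q (i+2):ℝ) * L := ⟨_, rfl⟩
  -- signs
  have haneg : a < 0 := by
    rw [ha]
    exact (hsign (i+1) (by omega)).1 (Int.even_iff.mpr (by omega))
  have hb0pos : 0 < b0 := by
    rw [hb0]
    exact (hsign i (by omega)).2 (Int.odd_iff.mpr (by omega))
  have hb2pos : 0 < b2 := by
    rw [hb2]
    exact (hsign (i+2) (by omega)).2 (Int.odd_iff.mpr (by omega))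
  -- basic bounds
  have hp1R : (1:ℝ) ≤ (p (i+1):ℝ) := by exact_mod_cast (hp (i+1) hi1).1
  have hq1R : (1:ℝ) ≤ (q (i+1):ℝ) := by exact_mod_cast (hq (i+1) hi1).1
  have hq2R : (1:ℝ) ≤ (q (i+2):ℝ) := by exact_mod_cast (hq (i+2) hi2).1
  have hq0R : (0:ℝ) ≤ (q i:ℝ) := by
    have := (hq (i+1) hi1).2
    rw [show i+1-1 = i by ring] at this
    exact_mod_cast this
  have hApos : 1 < A := by
    rw [hA]
    have := mul_le_mul_of_nonneg_right hq1R hL0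
    linarith
  have hq1pos : (0:ℝ) < (q (i+1):ℝ) := by linarith
  -- q monotonicity
  have hqd : (q i:ℝ) + 1 ≤ (q (i+1):ℝ) := by
    have : q i + 1 ≤ q (i+1) := by
      rcases eq_or_lt_of_le hi with h | h
      · rw [← h]; norm_num [hq0, hqm]
      · have hi0 : (0:ℤ) ≤ i := by omega
        have hi1' : (0:ℤ) ≤ i - 1 := by omega
        have hr := hqrec i hi0
        have hu' := hu1 (i+1) (by omega)
        have hqi : 1 ≤ q i := (hq i hi0).1
        have hqi1 : 1 ≤ q (i-1) := (hq (i-1) hi1').1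
        have hmul : 1 * q i ≤ u (i+1) * q i := by
          apply mul_le_mul_of_nonneg_right hu'
          omega
        rw [hr]
        linarith
    exact_mod_cast this
  have hqmle : (q (i+1):ℝ) ≤ (q (i+2):ℝ) := by
    have : q (i+1) ≤ q (i+2) := by
      have hr := hqrec (i+1) hi1
      rw [show i+1+1 = i+2 by ring, show i+1-1 = i by ring] at hr
      have hu' := hu1 (i+2) hi2
      have hqi1 : 1 ≤ q (i+1) := (hq (i+1) hi1).1
      have hqi : (0:ℤ) ≤ q i := by exact_mod_cast hq0R
      have hmul : 1 * q (i+1) ≤ u (i+2) * q (i+1) := by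
        apply mul_le_mul_of_nonneg_right hu'
        omega
      rw [hr]
      linarith
    exact_mod_cast this
  -- determinant identities at i
  have hd1 : p (i+1) * q i - p i * q (i+1) = -1 := by
    have := hdet i hi
    rwa [if_neg (fun h => by have := Int.even_iff.mp h; omega)] at this
  have hd2 : p (i+2) * q (i+1) - p (i+1) * q (i+2) = 1 := by
    have := hdet (i+1) (by omega)
    rw [show i+1+1 = i+2 by ring] at this
    rwa [if_pos (Int.even_iff.mpr (by omega))] at this
  have hd1R : (p (i+1):ℝ) * (q i:ℝ) - (p i:ℝ) * (q (i+1):ℝ) = -1 := by exact_mod_cast hd1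
  have hd2R : (p (i+2):ℝ) * (q (i+1):ℝ) - (p (i+1):ℝ) * (q (i+2):ℝ) = 1 := by exact_mod_cast hd2
  have hr1 : (q (i+1):ℝ) * b0 - (q i:ℝ) * a = 1 := by
    rw [hb0, ha]; linear_combination -hd1R
  have hr2 : (q (i+2):ℝ) * a - (q (i+1):ℝ) * b2 = -1 := by
    rw [ha, hb2]; linear_combination -hd2R
  -- recurrence for beta at i+2
  have hbrec : b2 = (u (i+2):ℝ) * a + b0 := by
    have hp2 := hprec (i+1) hi1
    have hq2 := hqrec (i+1) hi1
    rw [show i+1+1 = i+2 by ring, show i+1-1 = i by ring] at hp2 hq2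
    rw [hb2, ha, hb0, hp2, hq2]; push_cast; ring
  -- |beta| decreasing: b2 < -a
  have hc3v : c (i+3) = -a/b2 := by
    have := hcb (i+1) (by omega)
    rw [show i+1+2 = i+3 by ring, show i+1+1 = i+2 by ring, ← ha, ← hb2] at this
    exact this
  have hdecr : b2 < -a := by
    have hh := hc1 (i+3) (by omega)
    rw [hc3v, lt_div_iff₀ (by linarith : (0:ℝ) < b2)] at hh
    linarith
  have hF7 : A - a = 2 * (q (i+1):ℝ) * L := by rw [hA, ha]; ring
  -- the N value
  have hEA : (p (i+1):ℝ)^2 - (D:ℝ) * (q (i+1):ℝ)^2 = A * a := by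
    rw [hA, ha]; linear_combination (q (i+1):ℝ)^2 * hL2
  have hNneg : A * a < 0 := mul_neg_of_pos_of_neg (by linarith) haneg
  have hNabs : |(p (i + 1) : ℝ) ^ 2 - (D : ℝ) * (q (i + 1) : ℝ) ^ 2| = A * (-a) := by
    rw [hEA, abs_of_neg hNneg]; ring
  have hNpos : 0 < A * (-a) := mul_pos (by linarith) (by linarith)
  -- key identity
  have E1 : (q (i+1):ℝ) * (A*(b0+b2) - 2*L)
      = A + A*((q i:ℝ)+(q (i+2):ℝ))*a + a := by
    linear_combination A*hr1 - A*hr2 + hF7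
  have hx1 : 1 < ((q (i+1):ℝ) + (q (i+2):ℝ)) * (-a) := by
    have hmul : (q (i+1):ℝ)*b2 < (q (i+1):ℝ)*(-a) := by
      exact mul_lt_mul_of_pos_left hdecr hq1pos
    nlinarith [hr2, hmul]
  -- upper bound
  have G1 : A*(b0+b2) - 2*L < A*(-a) := by
    rw [← mul_lt_mul_iff_right₀ hq1pos, E1]
    have h1 : 0 < A * (((q (i+1):ℝ) + (q (i+2):ℝ)) * (-a) - 1) :=
      mul_pos (by linarith) (by linarith)
    have h2 : 0 ≤ A * ((q i:ℝ) * (-a)) :=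
      mul_nonneg (by linarith) (mul_nonneg hq0R (by linarith))
    nlinarith [h1, h2, haneg]
  -- lower bound
  have hq2x : (q (i+2):ℝ) * (-a) < 1 := by
    have hmul2 : 1*b2 ≤ (q (i+1):ℝ)*b2 := mul_le_mul_of_nonneg_right hq1R (le_of_lt hb2pos)
    nlinarith [hr2, hmul2, hb2pos]
  have hm0 : (0:ℝ) ≤ (q i:ℝ) + (q (i+2):ℝ) - (q (i+1):ℝ) := by linarith
  have keyX : (-a) * (1 + A*((q i:ℝ) + (q (i+2):ℝ) - (q (i+1):ℝ))) < A := by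
    have h1 : (0:ℝ) < 1 + A*((q i:ℝ) + (q (i+2):ℝ) - (q (i+1):ℝ)) := by
      have := mul_nonneg (le_of_lt (lt_trans one_pos hApos)) hm0
      linarith
    have h2 : ((q (i+2):ℝ) * (-a)) * (1 + A*((q i:ℝ) + (q (i+2):ℝ) - (q (i+1):ℝ)))
        < 1 * (1 + A*((q i:ℝ) + (q (i+2):ℝ) - (q (i+1):ℝ))) :=
      mul_lt_mul_of_pos_right hq2x h1
    have hAq : (1:ℝ)*(1:ℝ) ≤ A * ((q (i+1):ℝ) - (q i:ℝ)) :=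
      mul_le_mul (by linarith) (by linarith) (by norm_num) (by linarith)
    have h3 : 1 + A*((q i:ℝ) + (q (i+2):ℝ) - (q (i+1):ℝ)) ≤ A * (q (i+2):ℝ) := by
      nlinarith [hAq]
    have hq2pos : (0:ℝ) < (q (i+2):ℝ) := by linarith
    have h4 : (q (i+2):ℝ) * ((-a) * (1 + A*((q i:ℝ) + (q (i+2):ℝ) - (q (i+1):ℝ))))
        < (q (i+2):ℝ) * A := by nlinarith [h2, h3]
    exact (mul_lt_mul_iff_right₀ hq2pos).mp h4
  have G2 : 2*L - A*(b0+b2) < A*(-a) := by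
    rw [← mul_lt_mul_iff_right₀ hq1pos,
      show (q (i+1):ℝ) * (2*L - A*(b0+b2)) = -((q (i+1):ℝ) * (A*(b0+b2) - 2*L)) by ring, E1]
    nlinarith [keyX, haneg]
  have keyabs : |A*(b0+b2) - 2*L| < A*(-a) := abs_lt.mpr ⟨by linarith, G1⟩
  -- T value
  obtain ⟨T, hTdef⟩ : ∃ T : ℝ, T = ((p (i + 1) * p i - (D : ℤ) * (q (i + 1) * q i) : ℤ) : ℝ) := ⟨_, rfl⟩
  have hT : T = A * b0 - L := by
    rw [hTdef]
    push_cast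
    rw [hA, hb0]
    linear_combination (q (i+1):ℝ) * (q i:ℝ) * hL2 + L * hd1R
  have h2T : 2 * T - (u (i+2):ℝ) * (A * (-a)) = A*(b0+b2) - 2*L := by
    rw [hT]
    linear_combination -A * hbrec
  constructor
  · -- first inequality
    rw [hNabs, ← hTdef]
    have hrewrite : T / (A * (-a)) - (u (i+2):ℝ)/2
        = (2 * T - (u (i+2):ℝ) * (A * (-a))) / (2 * (A * (-a))) := by
      rw [div_sub_div _ _ (ne_of_gt hNpos) (two_ne_zero), div_eq_div_iff (by positivity) (by positivity)]
      ring
    rw [hrewrite, h2T, abs_div, abs_of_pos (by linarith : (0:ℝ) < 2 * (A * (-a))),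
      div_lt_iff₀ (by linarith : (0:ℝ) < 2 * (A * (-a)))]
    calc |A*(b0+b2) - 2*L| < A*(-a) := keyabs
      _ = 1/2 * (2 * (A * (-a))) := by ring
  · -- second inequality
    rw [hNabs]
    have hane : a ≠ 0 := ne_of_lt haneg
    have hb2ne : b2 ≠ 0 := ne_of_gt hb2pos
    have hc2v : c (i+2) = -b0/a := by
      have := hcb i hi
      rw [← hb0, ← ha] at this
      exact this
    have hfinal : -2 * L + (A * (-a)) * (c (i+2) + 1/c (i+3)) = A*(b0+b2) - 2*L := by
      rw [hc2v, hc3v]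
      field_simp [hane, hb2ne]
      ring
    rw [hfinal]
    exact keyabs
end

section
/- Let i be odd and r_0 ∈ {0,...,u_{i+2}} be an index at which N(α_{i,r}) is maximal among 0 ≤ r ≤ u_{i+2}. Then u_{i+2}/2 − 1 < r_0 < u_{i+2}/2 + 1; in particular if u_{i+2} is even then r_0 = u_{i+2}/2. -/
open Real

theorem stmt15 (D : ℕ) (hDsf : Squarefree D) (hD4 : D % 4 = 2 ∨ D % 4 = 3)
    (u : ℤ → ℤ) (c : ℤ → ℝ)
    (hc0 : c 0 = Real.sqrt D)
    (hu : ∀ i : ℤ, 0 ≤ i → u i = ⌊c i⌋)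
    (hcrec : ∀ i : ℤ, 0 ≤ i → c (i + 1) = 1 / (c i - u i))
    (p q : ℤ → ℤ)
    (hpm : p (-1) = 1) (hqm : q (-1) = 0)
    (hp0 : p 0 = u 0) (hq0 : q 0 = 1)
    (hprec : ∀ i : ℤ, 0 ≤ i → p (i + 1) = u (i + 1) * p i + p (i - 1))
    (hqrec : ∀ i : ℤ, 0 ≤ i → q (i + 1) = u (i + 1) * q i + q (i - 1)) :
    ∀ i : ℤ, Odd i → -1 ≤ i → ∀ r₀ : ℤ, 0 ≤ r₀ → r₀ ≤ u (i + 2) →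
      (∀ r : ℤ, 0 ≤ r → r ≤ u (i + 2) →
        (((p i : ℝ) + (r : ℝ) * (p (i + 1) : ℝ)) ^ 2 - (D : ℝ) * ((q i : ℝ) + (r : ℝ) * (q (i + 1) : ℝ)) ^ 2) ≤ (((p i : ℝ) + (r₀ : ℝ) * (p (i + 1) : ℝ)) ^ 2 - (D : ℝ) * ((q i : ℝ) + (r₀ : ℝ) * (q (i + 1) : ℝ)) ^ 2)) →
      ((u (i + 2) : ℝ) / 2 - 1 < (r₀ : ℝ) ∧ (r₀ : ℝ) < (u (i + 2) : ℝ) / 2 + 1) ∧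
      ∀ v : ℤ, u (i + 2) = 2 * v → r₀ = v := by
  have hD2 : 2 ≤ D := by rcases hD4 with h | h <;> omega
  -- D is not a square (squares are 0 or 1 mod 4)
  have hDns : ¬ IsSquare D := by
    rintro ⟨k, hk⟩
    rcases Nat.even_or_odd k with ⟨m, hm⟩ | ⟨m, hm⟩ <;> subst hm <;>
        rcases hD4 with h | h <;> subst hk
    · have : (m + m) * (m + m) = 4 * (m * m) := by ring
      omega
    · have : (m + m) * (m + m) = 4 * (m * m) := by ring
      omega
    · have : (2 * m + 1) * (2 * m + 1) = 4 * (m * m + m) + 1 := by ring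
      omega
    · have : (2 * m + 1) * (2 * m + 1) = 4 * (m * m + m) + 1 := by ring
      omega
  have hirr0 : Irrational (c 0) := by
    rw [hc0]; exact irrational_sqrt_natCast_iff.mpr hDns
  have hc0gt : 1 < c 0 := by
    rw [hc0]
    have : ((1 : ℝ)) < Real.sqrt 2 := by
      rw [show (1:ℝ) = Real.sqrt 1 by simp]
      exact Real.sqrt_lt_sqrt (by norm_num) (by norm_num)
    calc (1:ℝ) < Real.sqrt 2 := this
      _ ≤ Real.sqrt D := Real.sqrt_le_sqrt (by exact_mod_cast hD2)
  -- basic facts about c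
  have hcfacts : ∀ j : ℤ, 0 ≤ j → Irrational (c j) ∧ 1 < c j := by
    intro j hj
    refine Int.le_induction (motive := fun j _ => Irrational (c j) ∧ 1 < c j) ?base ?step j hj
    case base => exact ⟨hirr0, hc0gt⟩
    case step =>
      intro n hn ih
      obtain ⟨hirr, hlt⟩ := ih
      have hne : c n ≠ (⌊c n⌋ : ℝ) := hirr.ne_int _
      have hfrpos : 0 < c n - (u n : ℝ) := by
        rw [hu n hn]
        have := (Int.fract_pos.mpr hne)
        rw [Int.fract] at this; linarith
      have hfrlt : c n - (u n : ℝ) < 1 := by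
        rw [hu n hn]
        have := Int.fract_lt_one (c n)
        rw [Int.fract] at this; linarith
      have hirrf : Irrational (c n - (u n : ℝ)) := hirr.sub_intCast _
      rw [hcrec n hn]
      constructor
      · rw [one_div]; exact hirrf.inv
      · rw [lt_div_iff₀ hfrpos, one_mul]; exact hfrlt
  have hufl : ∀ j : ℤ, 0 ≤ j → (u j : ℝ) < c j ∧ c j < (u j : ℝ) + 1 ∧ 1 ≤ u j := by
    intro j hj
    obtain ⟨hirr, hlt⟩ := hcfacts j hj
    have hne : c j ≠ (⌊c j⌋ : ℝ) := hirr.ne_int _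
    have h1 : (⌊c j⌋ : ℝ) ≤ c j := Int.floor_le _
    have h2 : c j < (⌊c j⌋ : ℝ) + 1 := Int.lt_floor_add_one _
    have h3 : 1 ≤ ⌊c j⌋ := by
      rw [Int.le_floor]; push_cast; linarith
    rw [hu j hj]
    exact ⟨lt_of_le_of_ne h1 (Ne.symm hne), h2, h3⟩
  -- the quantities α and β
  set A : ℤ → ℝ := fun j => (p j : ℝ) + (q j : ℝ) * c 0 with hAdef
  set B : ℤ → ℝ := fun j => (p j : ℝ) - (q j : ℝ) * c 0 with hBdef
  have hcc : c 0 * c 0 = (D : ℝ) := by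
    rw [hc0]; exact Real.mul_self_sqrt (Nat.cast_nonneg D)
  -- c (j+1) * (c j - u j) = 1
  have hcd : ∀ j : ℤ, 0 ≤ j → c (j + 1) * (c j - (u j : ℝ)) = 1 := by
    intro j hj
    have hfrpos : 0 < c j - (u j : ℝ) := by
      have := (hufl j hj).1; linarith
    rw [hcrec j hj, one_div, inv_mul_cancel₀ hfrpos.ne']
  have key : ∀ j : ℤ, -1 ≤ j →
      (0 < A j ∧ A j < A (j + 1) ∧ B j + c (j + 2) * B (j + 1) = 0 ∧
       ((Even j → B j < 0) ∧ (Odd j → 0 < B j))) := by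
    intro j hj
    refine Int.le_induction (motive := fun j _ => 0 < A j ∧ A j < A (j + 1) ∧
        B j + c (j + 2) * B (j + 1) = 0 ∧
        ((Even j → B j < 0) ∧ (Odd j → 0 < B j))) ?base2 ?step2 j hj
    case base2 =>
      have hAm1 : A (-1) = 1 := by simp [hAdef, hpm, hqm]
      have hBm1 : B (-1) = 1 := by simp [hBdef, hpm, hqm]
      have hA0 : A 0 = (u 0 : ℝ) + c 0 := by simp [hAdef, hp0, hq0]
      have hB0 : B 0 = (u 0 : ℝ) - c 0 := by simp [hBdef, hp0, hq0]
      have hu0 : 1 ≤ u 0 := (hufl 0 le_rfl).2.2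
      have hu0R : (1 : ℝ) ≤ (u 0 : ℝ) := by exact_mod_cast hu0
      have hcd0 := hcd 0 le_rfl
      norm_num at hcd0
      refine ⟨by rw [hAm1]; norm_num, ?_, ?_, ?_, ?_⟩
      · rw [hAm1, show (-1 : ℤ) + 1 = 0 by ring, hA0]; linarith
      · rw [show (-1 : ℤ) + 2 = 1 by ring, show (-1 : ℤ) + 1 = 0 by ring, hBm1, hB0]
        linear_combination -hcd0
      · rintro ⟨k, hk⟩; omega
      · intro _; rw [hBm1]; norm_num
    case step2 =>
      intro n hn ih
      obtain ⟨hApos, hAlt, hBrel, hBsgn⟩ := ih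
      have hn2 : (0 : ℤ) ≤ n + 1 := by omega
      have hp2 : p (n + 2) = u (n + 2) * p (n + 1) + p n := by
        have h := hprec (n + 1) hn2
        rw [show n + 1 + 1 = n + 2 by ring, show n + 1 - 1 = n by ring] at h
        exact h
      have hq2 : q (n + 2) = u (n + 2) * q (n + 1) + q n := by
        have h := hqrec (n + 1) hn2
        rw [show n + 1 + 1 = n + 2 by ring, show n + 1 - 1 = n by ring] at h
        exact h
      have hArec : A (n + 2) = (u (n + 2) : ℝ) * A (n + 1) + A n := by
        simp only [hAdef, hp2, hq2]; push_cast; ring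
      have hBrec : B (n + 2) = (u (n + 2) : ℝ) * B (n + 1) + B n := by
        simp only [hBdef, hp2, hq2]; push_cast; ring
      have hcp2 : 0 < c (n + 2) := by
        have := (hcfacts (n + 2) (by omega)).2; linarith
      have hu2 : (1 : ℝ) ≤ (u (n + 2) : ℝ) := by
        exact_mod_cast (hufl (n + 2) (by omega)).2.2
      have hA1pos : 0 < A (n + 1) := lt_trans hApos hAlt
      have h3 := hcd (n + 2) (by omega)
      rw [show n + 2 + 1 = n + 3 by ring] at h3
      refine ⟨hA1pos, ?_, ?_, ?_, ?_⟩
      · rw [show n + 1 + 1 = n + 2 by ring, hArec]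
        nlinarith [mul_le_mul_of_nonneg_right hu2 hA1pos.le]
      · rw [show n + 1 + 2 = n + 3 by ring, show n + 1 + 1 = n + 2 by ring]
        linear_combination c (n + 3) * hBrec + c (n + 3) * hBrel + (-(B (n + 1))) * h3
      · rintro ⟨k, hk⟩
        have ho : Odd n := ⟨k - 1, by omega⟩
        have hBn : 0 < B n := hBsgn.2 ho
        by_contra hB'
        push_neg at hB'
        have := mul_nonneg hcp2.le hB'
        linarith
      · rintro ⟨k, hk⟩
        have he : Even n := ⟨k, by omega⟩
        have hBn : B n < 0 := hBsgn.1 he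
        by_contra hB'
        push_neg at hB'
        have := mul_nonpos_of_nonneg_of_nonpos hcp2.le hB'
        linarith
  -- main argument
  intro i hiodd hi r₀ hr0 hru hmax
  obtain ⟨hApos, hAlt, hBrel, _⟩ := key i hi
  have hkey1 := key (i + 1) (by omega)
  have hB'neg : B (i + 1) < 0 := hkey1.2.2.2.1 (Odd.add_one hiodd)
  obtain ⟨hUc, hcU1, hU1⟩ := hufl (i + 2) (by omega)
  -- the norm form factors
  have hF : ∀ x : ℝ,
      (((p i : ℝ) + x * (p (i + 1) : ℝ)) ^ 2 - (D : ℝ) * ((q i : ℝ) + x * (q (i + 1) : ℝ)) ^ 2)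
      = (A i + x * A (i + 1)) * (B i + x * B (i + 1)) := by
    intro x
    simp only [hAdef, hBdef]
    linear_combination (((q i : ℝ) + x * (q (i + 1) : ℝ)) ^ 2) * hcc
  have hmax' : ∀ r : ℤ, 0 ≤ r → r ≤ u (i + 2) →
      (A i + (r : ℝ) * A (i + 1)) * (B i + (r : ℝ) * B (i + 1)) ≤
      (A i + (r₀ : ℝ) * A (i + 1)) * (B i + (r₀ : ℝ) * B (i + 1)) := by
    intro r h1 h2
    have := hmax r h1 h2
    rwa [hF, hF] at this
  set a : ℝ := A i
  set a' : ℝ := A (i + 1)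
  set b : ℝ := B i
  set b' : ℝ := B (i + 1)
  set C : ℝ := c (i + 2)
  -- left bound
  have hleft : (u (i + 2) : ℝ) / 2 - 1 < (r₀ : ℝ) := by
    by_contra hle
    push_neg at hle
    have hint : 2 * r₀ + 2 ≤ u (i + 2) := by
      have : (2 * r₀ + 2 : ℝ) ≤ (u (i + 2) : ℝ) := by push_cast; linarith
      exact_mod_cast this
    have hm := hmax' (r₀ + 1) (by omega) (by omega)
    push_cast at hm
    have hid : (a + ((r₀ : ℝ) + 1) * a') * (b + ((r₀ : ℝ) + 1) * b') - (a + (r₀ : ℝ) * a') * (b + (r₀ : ℝ) * b')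
        = b' * (a + a' * (2 * (r₀ : ℝ) + 1 - C)) := by
      linear_combination a' * hBrel
    have ht : 2 * (r₀ : ℝ) + 1 - C ≤ -1 := by
      have : (2 * r₀ + 2 : ℝ) ≤ (u (i + 2) : ℝ) := by exact_mod_cast hint
      linarith
    have hbr : a + a' * (2 * (r₀ : ℝ) + 1 - C) < 0 := by
      have h1 : a' * (2 * (r₀ : ℝ) + 1 - C) ≤ a' * (-1) :=
        mul_le_mul_of_nonneg_left ht (lt_trans hApos hAlt).le
      linarith
    have hpos : 0 < b' * (a + a' * (2 * (r₀ : ℝ) + 1 - C)) := mul_pos_of_neg_of_neg hB'neg hbr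
    linarith
  have hright : (r₀ : ℝ) < (u (i + 2) : ℝ) / 2 + 1 := by
    by_contra hle
    push_neg at hle
    have hint : u (i + 2) + 2 ≤ 2 * r₀ := by
      have : (u (i + 2) : ℝ) + 2 ≤ (2 * r₀ : ℝ) := by push_cast; linarith
      exact_mod_cast this
    have hm := hmax' (r₀ - 1) (by omega) (by omega)
    push_cast at hm
    have hid : (a + (r₀ : ℝ) * a') * (b + (r₀ : ℝ) * b') - (a + ((r₀ : ℝ) - 1) * a') * (b + ((r₀ : ℝ) - 1) * b')
        = b' * (a + a' * (2 * (r₀ : ℝ) - 1 - C)) := by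
      linear_combination a' * hBrel
    have ht : 0 < 2 * (r₀ : ℝ) - 1 - C := by
      have : (u (i + 2) : ℝ) + 2 ≤ 2 * (r₀ : ℝ) := by exact_mod_cast hint
      linarith
    have hbr : 0 < a + a' * (2 * (r₀ : ℝ) - 1 - C) := by
      have h1 : 0 < a' * (2 * (r₀ : ℝ) - 1 - C) := mul_pos (lt_trans hApos hAlt) ht
      linarith
    have hneg : b' * (a + a' * (2 * (r₀ : ℝ) - 1 - C)) < 0 := mul_neg_of_neg_of_pos hB'neg hbr
    linarith
  refine ⟨⟨hleft, hright⟩, ?_⟩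
  intro v hv
  rw [hv] at hleft hright
  push_cast at hleft hright
  have h1 : v - 1 < r₀ := by exact_mod_cast (by linarith : (v : ℝ) - 1 < (r₀ : ℝ))
  have h2 : r₀ < v + 1 := by exact_mod_cast (by linarith : (r₀ : ℝ) < (v : ℝ) + 1)
  omega
end

section
/- Let i be odd with N_{i+1} = N (the minimal absolute value of a negative norm in ℤ[√D]). Then there exists r with 0 ≤ r ≤ u_{i+2} and an integer a with |a| ≤ N/2 such that N(α_{i,r}) = (D − a²)/N. -/
open Real

theorem stmt16 (D : ℕ) (hDsf : Squarefree D) (hD4 : D % 4 = 2 ∨ D % 4 = 3)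
    (u : ℤ → ℤ) (c : ℤ → ℝ)
    (hc0 : c 0 = Real.sqrt D)
    (hu : ∀ i : ℤ, 0 ≤ i → u i = ⌊c i⌋)
    (hcrec : ∀ i : ℤ, 0 ≤ i → c (i + 1) = 1 / (c i - u i))
    (p q : ℤ → ℤ)
    (hpm : p (-1) = 1) (hqm : q (-1) = 0)
    (hp0 : p 0 = u 0) (hq0 : q 0 = 1)
    (hprec : ∀ i : ℤ, 0 ≤ i → p (i + 1) = u (i + 1) * p i + p (i - 1))
    (hqrec : ∀ i : ℤ, 0 ≤ i → q (i + 1) = u (i + 1) * q i + q (i - 1))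
    (N : ℕ)
    (hN : IsLeast {n : ℕ | 0 < n ∧ ∃ a b : ℤ, a ^ 2 - (D : ℤ) * b ^ 2 = -(n : ℤ)} N) :
    ∀ i : ℤ, Odd i → -1 ≤ i →
      |(p (i + 1)) ^ 2 - (D : ℤ) * (q (i + 1)) ^ 2| = (N : ℤ) →
      ∃ r a : ℤ, 0 ≤ r ∧ r ≤ u (i + 2) ∧ (|a| : ℝ) ≤ (N : ℝ) / 2 ∧
        (((p i : ℝ) + (r : ℝ) * (p (i + 1) : ℝ)) ^ 2 - (D : ℝ) * ((q i : ℝ) + (r : ℝ) * (q (i + 1) : ℝ)) ^ 2) = ((D : ℝ) - (a : ℝ) ^ 2) / (N : ℝ) := by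
  -- basic facts about D
  have hD2 : 2 ≤ D := by rcases hD4 with h | h <;> omega
  have hDnotsq : ¬ IsSquare D := by
    rintro ⟨k, hk⟩
    have : IsUnit k := hDsf k (by rw [hk])
    rw [Nat.isUnit_iff] at this
    rw [this] at hk
    omega
  have hirrD : Irrational (Real.sqrt D) := irrational_sqrt_natCast_iff.mpr hDnotsq
  have hDR1 : (1:ℝ) < (D:ℝ) := by
    have : (2:ℝ) ≤ (D:ℝ) := by exact_mod_cast hD2
    linarith
  have hsqrtD1 : 1 < Real.sqrt D := by
    rw [show (1:ℝ) = Real.sqrt 1 by simp]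
    exact Real.sqrt_lt_sqrt (by norm_num) hDR1
  have hsq : Real.sqrt D ^ 2 = (D:ℝ) := Real.sq_sqrt (by positivity)
  -- irrationality of all complete quotients
  have hcI : ∀ j : ℤ, 0 ≤ j → Irrational (c j) := by
    refine Int.le_induction ?_ ?_
    · rw [hc0]; exact hirrD
    · intro j hj ih
      rw [hcrec j hj, hu j hj, one_div]
      exact (ih.sub_intCast ⌊c j⌋).inv
  -- fractional part bounds
  have hfrac : ∀ j : ℤ, 0 ≤ j → 0 < c j - u j ∧ c j - u j < 1 := by
    intro j hj
    rw [hu j hj]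
    constructor
    · have hne : c j ≠ (⌊c j⌋ : ℝ) := (hcI j hj).ne_int _
      have := Int.floor_le (c j)
      cases this.lt_or_eq with
      | inl h => linarith
      | inr h => exact absurd h.symm hne
    · have := Int.lt_floor_add_one (c j)
      linarith
  -- all complete quotients exceed 1
  have hcgt1 : ∀ j : ℤ, 0 ≤ j → 1 < c j := by
    intro j hj
    rcases eq_or_lt_of_le hj with h | h
    · rw [← h, hc0]; exact hsqrtD1
    · have hj1 : 0 ≤ j - 1 := by omega
      have := hcrec (j - 1) hj1
      rw [show j - 1 + 1 = j from by ring] at this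
      rw [this]
      obtain ⟨h1, h2⟩ := hfrac (j - 1) hj1
      exact one_lt_one_div h1 h2
  -- partial quotients are ≥ 1
  have hu1 : ∀ j : ℤ, 0 ≤ j → 1 ≤ u j := by
    intro j hj
    rw [hu j hj]
    exact Int.le_floor.mpr (by exact_mod_cast (hcgt1 j hj).le)
  -- positivity and monotonicity of A j := p j + q j * √D
  have hA : ∀ j : ℤ, -1 ≤ j →
      (0 : ℝ) < (p j : ℝ) + (q j : ℝ) * Real.sqrt D ∧
      (p j : ℝ) + (q j : ℝ) * Real.sqrt D < (p (j+1) : ℝ) + (q (j+1) : ℝ) * Real.sqrt D := by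
    refine Int.le_induction ?_ ?_
    · rw [show (-1:ℤ) + 1 = 0 from by ring, hpm, hqm, hp0, hq0]
      have hu0 : (1:ℝ) ≤ (u 0 : ℝ) := by exact_mod_cast hu1 0 le_rfl
      push_cast
      constructor <;> nlinarith
    · intro j hj ih
      obtain ⟨h0, h1⟩ := ih
      have hp2 : p (j + 1 + 1) = u (j + 1 + 1) * p (j + 1) + p j := by
        have := hprec (j + 1) (by omega)
        rw [show j + 1 - 1 = j from by ring] at this
        exact this
      have hq2 : q (j + 1 + 1) = u (j + 1 + 1) * q (j + 1) + q j := by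
        have := hqrec (j + 1) (by omega)
        rw [show j + 1 - 1 = j from by ring] at this
        exact this
      have hu2 : (1:ℝ) ≤ (u (j + 1 + 1) : ℝ) := by exact_mod_cast hu1 (j + 1 + 1) (by omega)
      refine ⟨by linarith, ?_⟩
      rw [hp2, hq2]
      push_cast
      nlinarith
  -- the key continued fraction identity
  have hG : ∀ j : ℤ, 0 ≤ j →
      c (j + 1) * ((p j : ℝ) - (q j : ℝ) * Real.sqrt D)
        = -((p (j-1) : ℝ) - (q (j-1) : ℝ) * Real.sqrt D) := by
    refine Int.le_induction ?_ ?_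
    · rw [show (0:ℤ) - 1 = -1 from by ring, hpm, hqm, hp0, hq0]
      rw [hcrec 0 le_rfl, hc0]
      have hne : Real.sqrt D - (u 0 : ℝ) ≠ 0 := by
        have := hirrD.ne_int (u 0)
        intro h; apply this; linarith
      push_cast
      field_simp
      ring
    · intro j hj ih
      have hfj1 : c (j + 1) - u (j + 1) ≠ 0 := ne_of_gt (hfrac (j + 1) (by omega)).1
      have hp2 : p (j + 1) = u (j + 1) * p j + p (j - 1) := hprec j hj
      have hq2 : q (j + 1) = u (j + 1) * q j + q (j - 1) := hqrec j hj
      have hc2 : c (j + 1 + 1) = 1 / (c (j + 1) - u (j + 1)) := hcrec (j + 1) (by omega)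
      rw [show j + 1 - 1 = j from by ring, hc2, hp2, hq2]
      push_cast
      field_simp
      linear_combination ih
  -- sign alternation of Bb j := p j - q j √D
  have hBbsign : ∀ j : ℤ, -1 ≤ j →
      (Odd j → 0 < (p j : ℝ) - (q j : ℝ) * Real.sqrt D) ∧
      (Even j → (p j : ℝ) - (q j : ℝ) * Real.sqrt D < 0) := by
    refine Int.le_induction ?_ ?_
    · constructor
      · intro _
        rw [hpm, hqm]; norm_num
      · intro h
        rw [Int.even_iff] at h; omega
    · intro j hj ih
      have hGj := hG (j + 1) (by omega)
      rw [show j + 1 - 1 = j from by ring] at hGj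
      have hcpos : (1:ℝ) < c (j + 1 + 1) := hcgt1 (j + 1 + 1) (by omega)
      have hcne : c (j + 1 + 1) ≠ 0 := by linarith
      have hBb1 : (p (j+1) : ℝ) - (q (j+1) : ℝ) * Real.sqrt D
          = -((p j : ℝ) - (q j : ℝ) * Real.sqrt D) / c (j + 1 + 1) := by
        rw [eq_div_iff hcne]
        linarith [hGj]
      constructor
      · intro hodd
        have hev : Even j := by
          rcases hodd with ⟨k, hk⟩
          exact ⟨k, by omega⟩
        have := ih.2 hev
        rw [hBb1]
        apply div_pos (by linarith) (by linarith)
      · intro hev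
        have hodd : Odd j := by
          rw [Int.even_iff] at hev
          exact ⟨(j+1)/2 - 1, by omega⟩
        have := ih.1 hodd
        rw [hBb1]
        apply div_neg_of_neg_of_pos (by linarith) (by linarith)
  -- cross determinant
  have hcross : ∀ j : ℤ, -1 ≤ j →
      (Odd j → p j * q (j+1) - p (j+1) * q j = 1) ∧
      (Even j → p j * q (j+1) - p (j+1) * q j = -1) := by
    refine Int.le_induction ?_ ?_
    · constructor
      · intro _
        rw [show (-1:ℤ) + 1 = 0 from by ring, hpm, hqm, hp0, hq0]; ring
      · intro h
        rw [Int.even_iff] at h; omega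
    · intro j hj ih
      have hp2 : p (j + 1 + 1) = u (j + 1 + 1) * p (j + 1) + p j := by
        have := hprec (j + 1) (by omega)
        rw [show j + 1 - 1 = j from by ring] at this
        exact this
      have hq2 : q (j + 1 + 1) = u (j + 1 + 1) * q (j + 1) + q j := by
        have := hqrec (j + 1) (by omega)
        rw [show j + 1 - 1 = j from by ring] at this
        exact this
      have hflip : p (j+1) * q (j+1+1) - p (j+1+1) * q (j+1)
          = -(p j * q (j+1) - p (j+1) * q j) := by
        rw [hp2, hq2]; ring
      constructor
      · intro hodd
        have hev : Even j := by
          rcases hodd with ⟨k, hk⟩; exact ⟨k, by omega⟩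
        rw [hflip, ih.2 hev]; ring
      · intro hev
        have hodd : Odd j := by
          rw [Int.even_iff] at hev
          exact ⟨(j+1)/2 - 1, by omega⟩
        rw [hflip, ih.1 hodd]
  -- === main part ===
  intro i hiodd him1 hNval
  have hEi1 : Even (i+1) := by rcases hiodd with ⟨k, hk⟩; exact ⟨k+1, by omega⟩
  have hOi2 : Odd (i+2) := by rcases hiodd with ⟨k, hk⟩; exact ⟨k+1, by omega⟩
  have hAi := hA i him1
  have hAi1 := hA (i+1) (by omega)
  rw [show i + 1 + 1 = i + 2 from by ring] at hAi1
  have hBbi1_neg := (hBbsign (i+1) (by omega)).2 hEi1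
  have hNpos : 0 < N := hN.1.1
  have hNR : (0:ℝ) < (N:ℝ) := by exact_mod_cast hNpos
  have hNZ : (0:ℤ) < (N:ℤ) := by exact_mod_cast hNpos
  -- the norm of α_{i+1} equals -N
  have hMr : ((p (i+1)^2 - (D:ℤ) * q (i+1)^2 : ℤ) : ℝ)
      = ((p (i+1):ℝ) + (q (i+1):ℝ) * Real.sqrt D) * ((p (i+1):ℝ) - (q (i+1):ℝ) * Real.sqrt D) := by
    push_cast
    linear_combination (q (i+1):ℝ)^2 * hsq
  have hMneg : (p (i+1)^2 - (D:ℤ) * q (i+1)^2 : ℤ) < 0 := by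
    have h : ((p (i+1)^2 - (D:ℤ) * q (i+1)^2 : ℤ) : ℝ) < 0 := by
      rw [hMr]; exact mul_neg_of_pos_of_neg hAi1.1 hBbi1_neg
    exact_mod_cast h
  have hMN : p (i+1)^2 - (D:ℤ) * q (i+1)^2 = -(N:ℤ) := by
    rw [abs_of_neg hMneg] at hNval; omega
  have hBb1A : ((p (i+1):ℝ) + (q (i+1):ℝ) * Real.sqrt D) * ((p (i+1):ℝ) - (q (i+1):ℝ) * Real.sqrt D)
      = -(N:ℝ) := by
    rw [← hMr, hMN]; push_cast; ring
  -- cross determinants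
  have hcri := (hcross i him1).1 hiodd
  have hcriR : (p i:ℝ) * (q (i+1):ℝ) - (p (i+1):ℝ) * (q i:ℝ) = 1 := by exact_mod_cast hcri
  have hcri1 := (hcross (i+1) (by omega)).2 hEi1
  rw [show i + 1 + 1 = i + 2 from by ring] at hcri1
  have hcri1R : (p (i+1):ℝ) * (q (i+2):ℝ) - (p (i+2):ℝ) * (q (i+1):ℝ) = -1 := by exact_mod_cast hcri1
  -- B := p i p (i+1) - D q i q (i+1)
  have hBiplus : ((p i * p (i+1) - (D:ℤ) * (q i * q (i+1)) : ℤ):ℝ) + Real.sqrt D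
      = ((p (i+1):ℝ) + (q (i+1):ℝ) * Real.sqrt D) * ((p i:ℝ) - (q i:ℝ) * Real.sqrt D) := by
    push_cast
    linear_combination (-Real.sqrt D) * hcriR + (q i * q (i+1):ℝ) * hsq
  have hBiminus : ((p i * p (i+1) - (D:ℤ) * (q i * q (i+1)) : ℤ):ℝ) - Real.sqrt D
      = ((p i:ℝ) + (q i:ℝ) * Real.sqrt D) * ((p (i+1):ℝ) - (q (i+1):ℝ) * Real.sqrt D) := by
    push_cast
    linear_combination (Real.sqrt D) * hcriR + (q i * q (i+1):ℝ) * hsq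
  have hGi1 := hG (i+1) (by omega)
  rw [show i + 1 - 1 = i from by ring, show i + 1 + 1 = i + 2 from by ring] at hGi1
  have hc2gt : 1 < c (i+2) := hcgt1 (i+2) (by omega)
  -- lower bound for B
  have key1 : ((p i * p (i+1) - (D:ℤ) * (q i * q (i+1)) : ℤ):ℝ) + Real.sqrt D
      = c (i+2) * (N:ℝ) := by
    rw [hBiplus]
    linear_combination ((p (i+1):ℝ) + (q (i+1):ℝ) * Real.sqrt D) * hGi1 - c (i+2) * hBb1A
  -- bounds via the ratio A i / A (i+1)
  have key2 : (((p i * p (i+1) - (D:ℤ) * (q i * q (i+1)) : ℤ):ℝ) - Real.sqrt D)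
      * ((p (i+1):ℝ) + (q (i+1):ℝ) * Real.sqrt D)
      = -(N:ℝ) * ((p i:ℝ) + (q i:ℝ) * Real.sqrt D) := by
    linear_combination ((p (i+1):ℝ) + (q (i+1):ℝ) * Real.sqrt D) * hBiminus
      + ((p i:ℝ) + (q i:ℝ) * Real.sqrt D) * hBb1A
  -- B' := p (i+1) p (i+2) - D q (i+1) q (i+2) and its negativity
  have hp3 : p (i+2) = u (i+2) * p (i+1) + p i := by
    have := hprec (i+1) (by omega)
    rw [show i + 1 + 1 = i + 2 from by ring, show i + 1 - 1 = i from by ring] at this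
    exact this
  have hq3 : q (i+2) = u (i+2) * q (i+1) + q i := by
    have := hqrec (i+1) (by omega)
    rw [show i + 1 + 1 = i + 2 from by ring, show i + 1 - 1 = i from by ring] at this
    exact this
  have hBi'eq : p (i+1) * p (i+2) - (D:ℤ) * (q (i+1) * q (i+2))
      = (p i * p (i+1) - (D:ℤ) * (q i * q (i+1))) - u (i+2) * (N:ℤ) := by
    rw [hp3, hq3]
    linear_combination u (i+2) * hMN
  have hBi'plus : ((p (i+1) * p (i+2) - (D:ℤ) * (q (i+1) * q (i+2)) : ℤ):ℝ) + Real.sqrt D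
      = ((p (i+1):ℝ) + (q (i+1):ℝ) * Real.sqrt D) * ((p (i+2):ℝ) - (q (i+2):ℝ) * Real.sqrt D) := by
    push_cast
    linear_combination (Real.sqrt D) * hcri1R + (q (i+1) * q (i+2):ℝ) * hsq
  have hBi'minus : ((p (i+1) * p (i+2) - (D:ℤ) * (q (i+1) * q (i+2)) : ℤ):ℝ) - Real.sqrt D
      = ((p (i+2):ℝ) + (q (i+2):ℝ) * Real.sqrt D) * ((p (i+1):ℝ) - (q (i+1):ℝ) * Real.sqrt D) := by
    push_cast
    linear_combination (-Real.sqrt D) * hcri1R + (q (i+1) * q (i+2):ℝ) * hsq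
  have hGi2 := hG (i+2) (by omega)
  rw [show i + 2 - 1 = i + 1 from by ring] at hGi2
  have hc3gt : 1 < c (i+2+1) := hcgt1 (i+2+1) (by omega)
  have key3 : (((p (i+1) * p (i+2) - (D:ℤ) * (q (i+1) * q (i+2)) : ℤ):ℝ) + Real.sqrt D)
      * c (i+2+1) = (N:ℝ) := by
    linear_combination c (i+2+1) * hBi'plus
      + ((p (i+1):ℝ) + (q (i+1):ℝ) * Real.sqrt D) * hGi2 - hBb1A
  have key4 : (((p (i+1) * p (i+2) - (D:ℤ) * (q (i+1) * q (i+2)) : ℤ):ℝ) - Real.sqrt D)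
      * ((p (i+1):ℝ) + (q (i+1):ℝ) * Real.sqrt D)
      = -(N:ℝ) * ((p (i+2):ℝ) + (q (i+2):ℝ) * Real.sqrt D) := by
    linear_combination ((p (i+1):ℝ) + (q (i+1):ℝ) * Real.sqrt D) * hBi'minus
      + ((p (i+2):ℝ) + (q (i+2):ℝ) * Real.sqrt D) * hBb1A
  -- abbreviations for the inequality reasoning
  set sD : ℝ := Real.sqrt D with hsDdef
  set BR : ℝ := ((p i * p (i+1) - (D:ℤ) * (q i * q (i+1)) : ℤ):ℝ) with hBRdef
  set BR' : ℝ := ((p (i+1) * p (i+2) - (D:ℤ) * (q (i+1) * q (i+2)) : ℤ):ℝ) with hBR'def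
  set A0R : ℝ := (p i:ℝ) + (q i:ℝ) * sD with hA0Rdef
  set A1R : ℝ := (p (i+1):ℝ) + (q (i+1):ℝ) * sD with hA1Rdef
  set A2R : ℝ := (p (i+2):ℝ) + (q (i+2):ℝ) * sD with hA2Rdef
  clear_value A2R A1R A0R BR' BR sD
  have hBi_lb1 : (N:ℝ) - sD < BR := by
    have h := mul_lt_mul_of_pos_right hc2gt hNR
    rw [one_mul] at h
    linarith only [key1, h]
  have hBi_lb2 : sD - (N:ℝ) < BR := by
    have h1 := mul_lt_mul_of_pos_left hAi.2 hNR
    have h2 : (-(N:ℝ)) * A1R < (BR - sD) * A1R := by linarith only [key2, h1]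
    have h3 := lt_of_mul_lt_mul_right h2 (le_of_lt hAi1.1)
    linarith only [h3]
  have hBiposR : (0:ℝ) < BR := by
    rcases le_total sD ((N:ℝ)) with h | h
    · linarith only [hBi_lb1, h]
    · linarith only [hBi_lb2, h]
  have hBipos : 0 < p i * p (i+1) - (D:ℤ) * (q i * q (i+1)) := by
    rw [hBRdef] at hBiposR
    exact_mod_cast hBiposR
  have hx3 : (0:ℝ) < BR' + sD := by
    by_contra h
    push_neg at h
    have h2 : (BR' + sD) * c (i+2+1) ≤ 0 := by
      calc (BR' + sD) * c (i+2+1) ≤ 0 * c (i+2+1) :=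
            mul_le_mul_of_nonneg_right h (by linarith only [hc3gt])
        _ = 0 := by ring
    linarith only [key3, h2, hNR]
  have hBi'_ub1 : BR' < (N:ℝ) - sD := by
    have h' := mul_lt_mul_of_pos_left hc3gt hx3
    rw [mul_one] at h'
    linarith only [key3, h']
  have hBi'_ub2 : BR' < sD - (N:ℝ) := by
    have h1 := mul_lt_mul_of_pos_left hAi1.2 hNR
    have h2 : (BR' - sD) * A1R < (-(N:ℝ)) * A1R := by linarith only [key4, h1]
    have h3 := lt_of_mul_lt_mul_right h2 (le_of_lt hAi1.1)
    linarith only [h3]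
  have hBi'negR : BR' < 0 := by
    rcases le_total sD ((N:ℝ)) with h | h
    · linarith only [hBi'_ub2, h]
    · linarith only [hBi'_ub1, h]
  have hBi'neg : p (i+1) * p (i+2) - (D:ℤ) * (q (i+1) * q (i+2)) < 0 := by
    rw [hBR'def] at hBi'negR
    exact_mod_cast hBi'negR
  have hBu : p i * p (i+1) - (D:ℤ) * (q i * q (i+1)) < u (i+2) * (N:ℤ) := by
    linarith only [hBi'eq, hBi'neg]
  -- choose r
  set B : ℤ := p i * p (i+1) - (D:ℤ) * (q i * q (i+1)) with hBdef
  have h2N : (0:ℤ) < 2 * (N:ℤ) := by linarith only [hNZ]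
  set r : ℤ := (2 * B + (N:ℤ)) / (2 * (N:ℤ)) with hrdef
  have hr0 : 0 ≤ r := Int.ediv_nonneg (by linarith only [hBipos, hNZ]) (by linarith only [hNZ])
  have hb1 : r * (2 * (N:ℤ)) ≤ 2 * B + (N:ℤ) := (Int.le_ediv_iff_mul_le h2N).mp le_rfl
  have hb2 : 2 * B + (N:ℤ) < (r + 1) * (2 * (N:ℤ)) := Int.lt_ediv_add_one_mul_self _ h2N
  have hru : r ≤ u (i+2) := by
    by_contra h
    push_neg at h
    have h2 : (u (i+2) + 1) * (2 * (N:ℤ)) ≤ r * (2 * (N:ℤ)) :=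
      mul_le_mul_of_nonneg_right (by omega) (by linarith only [hNZ])
    linarith only [h2, hb1, hBu, hNZ]
  refine ⟨r, B - r * (N:ℤ), hr0, hru, ?_, ?_⟩
  · -- |a| ≤ N/2
    have h1 : -(N:ℤ) ≤ 2 * (B - r * (N:ℤ)) := by linarith only [hb1]
    have h2 : 2 * (B - r * (N:ℤ)) ≤ (N:ℤ) := by linarith only [hb2]
    have h1R : -(N:ℝ) ≤ 2 * ((B - r * (N:ℤ) : ℤ):ℝ) := by exact_mod_cast h1
    have h2R : 2 * ((B - r * (N:ℤ) : ℤ):ℝ) ≤ (N:ℝ) := by exact_mod_cast h2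
    rw [abs_le]
    constructor <;> linarith only [h1R, h2R]
  · -- the norm equation
    rw [eq_div_iff (ne_of_gt hNR)]
    have hkey : ((p i + r * p (i+1))^2 - (D:ℤ) * (q i + r * q (i+1))^2)
        * (p (i+1)^2 - (D:ℤ) * q (i+1)^2)
        = ((p i * p (i+1) - (D:ℤ) * (q i * q (i+1))) + r * (p (i+1)^2 - (D:ℤ) * q (i+1)^2))^2
          - (D:ℤ) * (p i * q (i+1) - p (i+1) * q i)^2 := by ring
    rw [hMN, hcri] at hkey
    have hZ : ((p i + r * p (i+1))^2 - (D:ℤ) * (q i + r * q (i+1))^2) * (N:ℤ)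
        = (D:ℤ) - (B - r * (N:ℤ))^2 := by
      rw [hBdef]
      linear_combination -hkey
    calc (((p i : ℝ) + (r : ℝ) * (p (i + 1) : ℝ)) ^ 2
          - (D : ℝ) * ((q i : ℝ) + (r : ℝ) * (q (i + 1) : ℝ)) ^ 2) * (N:ℝ)
        = (((p i + r * p (i+1))^2 - (D:ℤ) * (q i + r * q (i+1))^2) * (N:ℤ) : ℤ) := by
          push_cast; ring
      _ = (((D:ℤ) - (B - r * (N:ℤ))^2 : ℤ) : ℝ) := by rw [hZ]
      _ = (D : ℝ) - ((B - r * (N:ℤ) : ℤ):ℝ) ^ 2 := by push_cast; ring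
end
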